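/- arXiv:2010.05285 — 6 statements merged into one kernel-verified Lean document; each statement's English description precedes it below -/
import Mathlib

section
/- Let G be a finite abelian group, let S be a symmetric subset of G with 0 ∉ S, and let k be a positive integer such that ks ≠ kt for all distinct s,t ∈ S, and such that 0 ∉ kS where kS = {ks : s ∈ S}. Then every automorphism of the Cayley graph Cay(G;S) is also an automorphism of the Cayley graph Cay(G;kS). -/
set_option linter.unusedSectionVars false

open Finset

/-- The Cayley graph of an abelian group `G` with connection set `S`.
When `S` is symmetric and `0 ∉ S`, distinct `g, h` are adjacent iff `g - h ∈ S`. -/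
def cayleyGraph {G : Type*} [AddCommGroup G] (S : Set G) : SimpleGraph G where
  Adj g h := g ≠ h ∧ g - h ∈ S ∧ h - g ∈ S
  symm := ⟨by rintro g h ⟨hne, h1, h2⟩; exact ⟨hne.symm, h2, h1⟩⟩
  loopless := ⟨by rintro g ⟨hne, -, -⟩; exact hne rfl⟩

/-- The canonical bipartite double cover of a simple graph. -/
def doubleCover {V : Type*} (X : SimpleGraph V) : SimpleGraph (V × ZMod 2) where
  Adj a b := X.Adj a.1 b.1 ∧ a.2 ≠ b.2
  symm := ⟨by rintro a b ⟨h1, h2⟩; exact ⟨h1.symm, h2.symm⟩⟩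
  loopless := ⟨by rintro a ⟨-, h2⟩; exact h2 rfl⟩

/-- The direct (tensor/categorical) product of simple graphs. -/
def directProd {V W : Type*} (X : SimpleGraph V) (Y : SimpleGraph W) :
    SimpleGraph (V × W) where
  Adj a b := X.Adj a.1 b.1 ∧ Y.Adj a.2 b.2
  symm := ⟨by rintro a b ⟨h1, h2⟩; exact ⟨h1.symm, h2.symm⟩⟩
  loopless := ⟨by rintro a ⟨h1, -⟩; exact X.loopless.irrefl _ h1⟩


section Aux

variable {G : Type*} [AddCommGroup G] [Fintype G] [DecidableEq G]

lemma cay_adj {S : Set G} (hsym : ∀ s ∈ S, -s ∈ S) (h0 : (0:G) ∉ S) (a b : G) :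
    (cayleyGraph S).Adj a b ↔ a - b ∈ S := by
  constructor
  · rintro ⟨-, h, -⟩; exact h
  · intro h
    refine ⟨fun e => ?_, h, ?_⟩
    · subst e; simp at h; exact h0 h
    · have := hsym _ h; rwa [neg_sub] at this

open Classical in
noncomputable def walkCount (X : SimpleGraph G) : ℕ → G → G → ℕ
  | 0, a, b => if a = b then 1 else 0
  | (n+1), a, b => ∑ x : G, if X.Adj a x then walkCount X n x b else 0

lemma walkCount_inv (X : SimpleGraph G) (φ : G ≃ G)
    (hφ : ∀ a b, X.Adj (φ a) (φ b) ↔ X.Adj a b) :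
    ∀ (n : ℕ) (a b : G), walkCount X n (φ a) (φ b) = walkCount X n a b := by
  intro n
  induction n with
  | zero =>
    intro a b
    simp only [walkCount, EmbeddingLike.apply_eq_iff_eq]
  | succ n ih =>
    intro a b
    simp only [walkCount]
    refine Fintype.sum_equiv φ.symm _ _ fun x => ?_
    have h1 : X.Adj (φ a) x ↔ X.Adj a (φ.symm x) := by
      conv_lhs => rw [← φ.apply_symm_apply x]
      exact hφ a (φ.symm x)
    have h2 : walkCount X n x (φ b) = walkCount X n (φ.symm x) b := by
      conv_lhs => rw [← φ.apply_symm_apply x]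
      exact ih (φ.symm x) b
    by_cases hc : X.Adj a (φ.symm x)
    · rw [if_pos (h1.mpr hc), if_pos hc, h2]
    · rw [if_neg (fun h => hc (h1.mp h)), if_neg hc]

noncomputable def tupleCount (S : Set G) (n : ℕ) (d : G) : ℕ :=
  Nat.card {f : Fin n → G // (∀ i, f i ∈ S) ∧ ∑ i, f i = d}

lemma tupleCount_zero (S : Set G) (d : G) : tupleCount S 0 d = if d = 0 then 1 else 0 := by
  rw [tupleCount]
  by_cases hd : d = 0
  · rw [if_pos hd]
    rw [Nat.card_eq_one_iff_unique]
    constructor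
    · constructor
      rintro ⟨f, hf⟩ ⟨g, hg⟩
      ext i
      exact absurd i.2 (Nat.not_lt_zero _)
    · exact ⟨⟨fun i => 0, fun i => absurd i.2 (Nat.not_lt_zero _), by simp [hd]⟩⟩
  · rw [if_neg hd]
    rw [Nat.card_eq_zero]
    left
    constructor
    rintro ⟨f, hf, hsum⟩
    simp at hsum
    exact hd hsum.symm

lemma tupleCount_succ (S : Set G) [DecidablePred (· ∈ S)] (n : ℕ) (d : G) :
    tupleCount S (n+1) d = ∑ x : G, if x ∈ S then tupleCount S n (d - x) else 0 := by
  have e : {f : Fin (n+1) → G // (∀ i, f i ∈ S) ∧ ∑ i, f i = d} ≃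
      Σ x : G, {f : Fin n → G // (x ∈ S ∧ ∀ i, f i ∈ S) ∧ ∑ i, f i = d - x} := by
    refine ⟨fun f => ⟨f.1 0, Fin.tail f.1, ⟨f.2.1 0, fun i => f.2.1 i.succ⟩, ?_⟩,
      fun p => ⟨Fin.cons p.1 p.2.1, ?_, ?_⟩, ?_, ?_⟩
    · have := f.2.2
      rw [Fin.sum_univ_succ] at this
      exact eq_sub_of_add_eq' this
    · intro i
      refine Fin.cases ?_ ?_ i
      · exact p.2.2.1.1
      · intro j; simpa using p.2.2.1.2 j
    · rw [Fin.sum_univ_succ]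
      simp only [Fin.cons_zero, Fin.cons_succ]
      rw [p.2.2.2]
      abel
    · rintro ⟨f, hf⟩
      apply Subtype.ext
      exact Fin.cons_self_tail f
    · rintro ⟨x, f, hf⟩
      rfl
  rw [tupleCount, Nat.card_congr e]
  letI : ∀ x : G, Fintype {f : Fin n → G // (x ∈ S ∧ ∀ i, f i ∈ S) ∧ ∑ i, f i = d - x} :=
    fun x => Fintype.ofFinite _
  rw [Nat.card_eq_fintype_card, Fintype.card_sigma]
  refine Finset.sum_congr rfl fun x _ => ?_
  by_cases hx : x ∈ S
  · rw [if_pos hx, tupleCount, Nat.card_eq_fintype_card]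
    exact Fintype.card_congr (Equiv.subtypeEquivRight fun f => by
      simp only [and_iff_right hx])
  · rw [if_neg hx]
    exact Fintype.card_eq_zero_iff.2 ⟨fun f => hx f.2.1.1⟩

lemma walkCount_eq (S : Set G) [DecidablePred (· ∈ S)]
    (hsym : ∀ s ∈ S, -s ∈ S) (h0 : (0:G) ∉ S) :
    ∀ (n : ℕ) (a b : G), walkCount (cayleyGraph S) n a b = tupleCount S n (a - b) := by
  intro n
  induction n with
  | zero =>
    intro a b
    rw [walkCount, tupleCount_zero]
    by_cases h : a = b
    · rw [if_pos h, if_pos (by rw [h, sub_self])]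
    · rw [if_neg h, if_neg (fun hc => h (sub_eq_zero.1 hc))]
  | succ n ih =>
    intro a b
    rw [walkCount, tupleCount_succ]
    refine Fintype.sum_equiv (Equiv.subLeft a) _ _ fun x => ?_
    have he : Equiv.subLeft a x = a - x := rfl
    rw [he]
    by_cases hx : (cayleyGraph S).Adj a x
    · have hs : a - x ∈ S := ((cay_adj hsym h0 a x).1 hx)
      rw [if_pos hx, if_pos hs, ih x b]
      congr 1
      abel
    · have hs : a - x ∉ S := fun hc => hx ((cay_adj hsym h0 a x).2 hc)
      rw [if_neg hx, if_neg hs]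

noncomputable def zCount (S : Set G) (p : ℕ) [NeZero p] (d : G) : ℕ :=
  Nat.card {f : ZMod p → G // (∀ i, f i ∈ S) ∧ ∑ i, f i = d}

lemma tupleCount_eq_zCount (S : Set G) (p : ℕ) [NeZero p] (d : G) :
    tupleCount S p d = zCount S p d := by
  have e : Fin p ≃ ZMod p := Fintype.equivOfCardEq (by simp [ZMod.card])
  refine Nat.card_congr ⟨fun f => ⟨fun i => f.1 (e.symm i), fun i => f.2.1 _, ?_⟩,
    fun f => ⟨fun i => f.1 (e i), fun i => f.2.1 _, ?_⟩, ?_, ?_⟩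
  · have : ∑ i : ZMod p, f.1 (e.symm i) = ∑ i : Fin p, f.1 i :=
      Fintype.sum_equiv e.symm _ _ fun i => rfl
    simpa [this] using f.2.2
  · have : ∑ i : Fin p, f.1 (e i) = ∑ i : ZMod p, f.1 i :=
      Fintype.sum_equiv e _ _ fun i => rfl
    simpa [this] using f.2.2
  · rintro ⟨f, hf⟩; apply Subtype.ext; funext i; simp
  · rintro ⟨f, hf⟩; apply Subtype.ext; funext i; simp

open Classical in
lemma zCount_modEq (S : Set G) (p : ℕ) (hp : p.Prime) (d : G)
    (hinj : ∀ s ∈ S, ∀ t ∈ S, s ≠ t → p • s ≠ p • t) :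
    haveI : NeZero p := ⟨hp.ne_zero⟩
    zCount S p d ≡ (if d ∈ (fun s => p • s) '' S then 1 else 0) [MOD p] := by
  haveI : NeZero p := ⟨hp.ne_zero⟩
  haveI : Fact p.Prime := ⟨hp⟩
  set α := {f : ZMod p → G // (∀ i, f i ∈ S) ∧ ∑ i, f i = d} with hα
  letI : SMul (Multiplicative (ZMod p)) α :=
    ⟨fun c f => ⟨fun i => f.1 (i + c.toAdd), fun i => f.2.1 _, by
      have h : ∑ i : ZMod p, f.1 (i + c.toAdd) = ∑ i : ZMod p, f.1 i :=
        Fintype.sum_equiv (Equiv.addRight c.toAdd) _ _ fun i => rfl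
      exact h.trans f.2.2⟩⟩
  letI : MulAction (Multiplicative (ZMod p)) α :=
    { one_smul := by
        rintro ⟨f, hf⟩
        apply Subtype.ext
        funext i
        show f (i + (1 : Multiplicative (ZMod p)).toAdd) = f i
        simp
      mul_smul := by
        rintro c c' ⟨f, hf⟩
        apply Subtype.ext
        funext i
        show f (i + (c * c').toAdd) = f (i + c.toAdd + c'.toAdd)
        rw [toAdd_mul, add_assoc] }
  have hpg : IsPGroup p (Multiplicative (ZMod p)) := by
    refine IsPGroup.of_card (n := 1) ?_
    rw [Nat.card_eq_fintype_card]
    simp [ZMod.card, pow_one]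
  have hmod := hpg.card_modEq_card_fixedPoints α
  -- identify fixed points
  have hfix : Nat.card (MulAction.fixedPoints (Multiplicative (ZMod p)) α) =
      Nat.card {s : G // s ∈ S ∧ p • s = d} := by
    refine Nat.card_congr ⟨fun f => ⟨f.1.1 0, f.1.2.1 0, ?_⟩, fun s =>
      ⟨⟨fun _ => s.1, fun _ => s.2.1, ?_⟩, ?_⟩, ?_, ?_⟩
    · -- p • f 0 = d
      have hconst : ∀ i : ZMod p, f.1.1 i = f.1.1 0 := by
        intro i
        have hf := f.2 (Multiplicative.ofAdd i)
        have h0 : (Multiplicative.ofAdd i • f.1).1 0 = f.1.1 0 :=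
          congrArg (fun g => g.1 0) hf
        have h1 : (Multiplicative.ofAdd i • f.1).1 0 = f.1.1 (0 + i) := rfl
        rw [h1, zero_add] at h0
        exact h0
      have hsum : ∑ i : ZMod p, f.1.1 i = d := f.1.2.2
      rw [Finset.sum_congr rfl (fun i _ => hconst i), Finset.sum_const] at hsum
      simpa [ZMod.card] using hsum
    · -- constant tuple sums to d
      rw [Finset.sum_const]
      simpa [ZMod.card] using s.2.2
    · -- constant tuple is a fixed point
      intro c
      apply Subtype.ext
      rfl
    · -- left inverse
      rintro ⟨⟨f, hf⟩, hfp⟩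
      apply Subtype.ext
      apply Subtype.ext
      funext i
      have hf2 := hfp (Multiplicative.ofAdd i)
      have h0 : (Multiplicative.ofAdd i • (⟨f, hf⟩ : α)).1 0 = f 0 :=
        congrArg (fun g => g.1 0) hf2
      have h1 : (Multiplicative.ofAdd i • (⟨f, hf⟩ : α)).1 0 = f (0 + i) := rfl
      rw [h1, zero_add] at h0
      exact h0.symm
    · rintro ⟨s, hs⟩
      rfl
  show Nat.card α ≡ _ [MOD p]
  refine hmod.trans ?_
  rw [hfix]
  by_cases hd : d ∈ (fun s => p • s) '' S
  · rw [if_pos hd]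
    obtain ⟨s, hs, hsd⟩ := hd
    have h1 : Nat.card {x : G // x ∈ S ∧ p • x = d} = 1 := by
      rw [Nat.card_eq_one_iff_unique]
      constructor
      · constructor
        rintro ⟨x, hx, hxd⟩ ⟨y, hy, hyd⟩
        apply Subtype.ext
        by_contra hne
        exact hinj x hx y hy (fun h => hne (by simpa using h)) (hxd.trans hyd.symm)
      · exact ⟨⟨s, hs, hsd⟩⟩
    rw [h1]
  · rw [if_neg hd]
    have h1 : Nat.card {x : G // x ∈ S ∧ p • x = d} = 0 := by
      rw [Nat.card_eq_zero]
      left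
      constructor
      rintro ⟨x, hx, hxd⟩
      exact hd ⟨x, hx, hxd⟩
    rw [h1]

open Classical in
lemma prime_step (S : Set G) (p : ℕ) (hp : p.Prime)
    (hsym : ∀ s ∈ S, -s ∈ S) (h0S : (0:G) ∉ S)
    (hinj : ∀ s ∈ S, ∀ t ∈ S, s ≠ t → p • s ≠ p • t)
    (h0p : (0:G) ∉ (fun s => p • s) '' S)
    (φ : G ≃ G) (hφ : ∀ a b, (cayleyGraph S).Adj (φ a) (φ b) ↔ (cayleyGraph S).Adj a b) :
    ∀ a b, (cayleyGraph ((fun s => p • s) '' S)).Adj (φ a) (φ b) ↔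
      (cayleyGraph ((fun s => p • s) '' S)).Adj a b := by
  haveI : NeZero p := ⟨hp.ne_zero⟩
  have himgsym : ∀ s ∈ (fun s => p • s) '' S, -s ∈ (fun s => p • s) '' S := by
    rintro _ ⟨s, hs, rfl⟩
    exact ⟨-s, hsym s hs, by simp⟩
  intro a b
  rw [cay_adj himgsym h0p, cay_adj himgsym h0p]
  have key : ∀ x y : G, walkCount (cayleyGraph S) p x y ≡
      (if x - y ∈ (fun s => p • s) '' S then 1 else 0) [MOD p] := by
    intro x y
    rw [walkCount_eq S hsym h0S, tupleCount_eq_zCount]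
    exact zCount_modEq S p hp _ hinj
  have h1 := key (φ a) (φ b)
  rw [walkCount_inv _ φ hφ] at h1
  have h2 := (key a b).symm.trans h1
  have hne10 : ¬ ((1:ℕ) ≡ 0 [MOD p]) := by
    intro hc
    have h1p : 1 % p = 1 := Nat.mod_eq_of_lt hp.one_lt
    have hc' : 1 % p = 0 % p := hc
    rw [h1p, Nat.zero_mod] at hc'
    exact one_ne_zero hc'
  by_cases hab : a - b ∈ (fun s => p • s) '' S <;>
    by_cases hfab : φ a - φ b ∈ (fun s => p • s) '' S
  · simp [hab, hfab]
  · rw [if_pos hab, if_neg hfab] at h2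
    exact absurd h2 hne10
  · rw [if_neg hab, if_pos hfab] at h2
    exact absurd h2.symm hne10
  · simp [hab, hfab]

lemma aut_smul_aux :
    ∀ k : ℕ, 0 < k → ∀ S : Set G, (∀ s ∈ S, -s ∈ S) → (0:G) ∉ S →
    (∀ s ∈ S, ∀ t ∈ S, s ≠ t → k • s ≠ k • t) → (0:G) ∉ (fun s => k • s) '' S →
    ∀ φ : G ≃ G, (∀ a b, (cayleyGraph S).Adj (φ a) (φ b) ↔ (cayleyGraph S).Adj a b) →
    ∀ a b, (cayleyGraph ((fun s => k • s) '' S)).Adj (φ a) (φ b) ↔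
      (cayleyGraph ((fun s => k • s) '' S)).Adj a b := by
  intro k
  induction k using Nat.strong_induction_on with
  | _ k ih =>
    intro hk S hsym h0S hinj h0k φ hφ
    classical
    rcases eq_or_ne k 1 with rfl | hk1
    · have himg : (fun s => (1:ℕ) • s) '' S = S := by
        have : (fun s : G => (1:ℕ) • s) = id := funext fun s => one_smul ℕ s
        rw [this, Set.image_id]
      rw [himg]
      exact hφ
    · set p := k.minFac with hpdef
      have hp : p.Prime := Nat.minFac_prime hk1
      set m := k / p with hmdef
      have hpm : p * m = k := Nat.mul_div_cancel' (Nat.minFac_dvd k)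
      have hm : 0 < m := Nat.div_pos (Nat.minFac_le hk) hp.pos
      have hmlt : m < k := Nat.div_lt_self hk hp.one_lt
      have hsmul : ∀ s : G, k • s = p • (m • s) := fun s => by rw [← hpm, mul_smul]
      have hinjm : ∀ s ∈ S, ∀ t ∈ S, s ≠ t → m • s ≠ m • t := fun s hs t ht hne heq =>
        hinj s hs t ht hne (by rw [hsmul, hsmul, heq])
      have h0m : (0:G) ∉ (fun s => m • s) '' S := by
        rintro ⟨s, hs, hs0⟩
        exact h0k ⟨s, hs, by simp only []; rw [hsmul s]; simp only at hs0; rw [hs0, smul_zero]⟩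
      have hφm := ih m hmlt hm S hsym h0S hinjm h0m φ hφ
      have hsymm : ∀ s ∈ (fun s => m • s) '' S, -s ∈ (fun s => m • s) '' S := by
        rintro _ ⟨s, hs, rfl⟩
        exact ⟨-s, hsym s hs, by simp⟩
      have hinjp : ∀ x ∈ (fun s => m • s) '' S, ∀ y ∈ (fun s => m • s) '' S,
          x ≠ y → p • x ≠ p • y := by
        rintro _ ⟨s, hs, rfl⟩ _ ⟨t, ht, rfl⟩ hne heq
        simp only at heq hne
        rcases eq_or_ne s t with rfl | hst
        · exact hne rfl
        · exact hinj s hs t ht hst (by rw [hsmul, hsmul, heq])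
      have himg2 : (fun x => p • x) '' ((fun s => m • s) '' S) = (fun s => k • s) '' S := by
        rw [Set.image_image]
        have : (fun s : G => p • (m • s)) = fun s => k • s := funext fun s => (hsmul s).symm
        rw [this]
      have h0p2 : (0:G) ∉ (fun x => p • x) '' ((fun s => m • s) '' S) := by
        rw [himg2]; exact h0k
      have hstep := prime_step ((fun s => m • s) '' S) p hp hsymm h0m hinjp h0p2 φ hφm
      intro a b
      rw [← himg2]
      exact hstep a b

end Aux

/-- If `G` is abelian and `k • s ≠ k • t` for distinct `s, t ∈ S`, then every
automorphism of `Cay(G; S)` is also an automorphism of `Cay(G; kS)`. -/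
theorem aut_cayley_smul {G : Type*} [AddCommGroup G] [Fintype G]
    (S : Set G) (hSsym : ∀ s ∈ S, -s ∈ S) (hS0 : (0 : G) ∉ S)
    (k : ℕ) (hk : 0 < k)
    (hinj : ∀ s ∈ S, ∀ t ∈ S, s ≠ t → k • s ≠ k • t)
    (h0 : (0 : G) ∉ (fun s => k • s) '' S)
    (φ : cayleyGraph S ≃g cayleyGraph S) :
    ∀ g h : G,
      (cayleyGraph ((fun s => k • s) '' S)).Adj (φ g) (φ h) ↔
        (cayleyGraph ((fun s => k • s) '' S)).Adj g h := by
  classical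
  intro g h
  exact aut_smul_aux k hk S hSsym hS0 hinj h0 φ.toEquiv (fun a b => φ.map_adj_iff) g h
end

section
/- Let G be a finite abelian group, let S be a symmetric subset of G with 0 ∉ S, and let p be a prime such that for every s ∈ S, the cardinality of the set {t ∈ S : pt = ps} is not divisible by p; assume also 0 ∉ pS, where pS = {ps : s ∈ S}. Then every automorphism of the Cayley graph Cay(G;S) is also an automorphism of the Cayley graph Cay(G;pS). -/
lemma cayley_adj_iff {G : Type*} [AddCommGroup G] (S : Set G)
    (hsym : ∀ s ∈ S, -s ∈ S) (h0 : (0 : G) ∉ S) (g h : G) :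
    (cayleyGraph S).Adj g h ↔ h - g ∈ S := by
  constructor
  · rintro ⟨-, -, h2⟩; exact h2
  · intro hm
    refine ⟨?_, ?_, hm⟩
    · rintro rfl; rw [sub_self] at hm; exact h0 hm
    · have := hsym _ hm; rwa [neg_sub] at this


/-- Weakened hypothesis version of the main lemma for a prime `p`: if each
fibre `{t ∈ S : p•t = p•s}` has cardinality not divisible by `p`, then every
automorphism of `Cay(G;S)` is also an automorphism of `Cay(G;pS)`. -/
theorem aut_cayley_smul_prime {G : Type*} [AddCommGroup G] [Fintype G] [DecidableEq G]
    (S : Finset G) (hSsym : ∀ s ∈ S, -s ∈ S) (hS0 : (0 : G) ∉ S)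
    (p : ℕ) (hp : p.Prime)
    (hfib : ∀ s ∈ S, ¬ (p ∣ (S.filter (fun t => p • t = p • s)).card))
    (h0 : (0 : G) ∉ (fun s => p • s) '' (S : Set G))
    (φ : cayleyGraph (S : Set G) ≃g cayleyGraph (S : Set G)) :
    ∀ g h : G,
      (cayleyGraph ((fun s => p • s) '' (S : Set G))).Adj (φ g) (φ h) ↔
        (cayleyGraph ((fun s => p • s) '' (S : Set G))).Adj g h := by
  classical
  haveI : NeZero p := ⟨hp.ne_zero⟩
  haveI : CharP (AddMonoidAlgebra (ZMod p) G) p := by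
    refine charP_of_injective_ringHom (f := AddMonoidAlgebra.singleZeroRingHom) ?_ p
    intro x y hxy
    have hxy' : AddMonoidAlgebra.single (0 : G) x = AddMonoidAlgebra.single 0 y := by
      simpa [AddMonoidAlgebra.singleZeroRingHom] using hxy
    exact AddMonoidAlgebra.single_right_injective hxy'
  set a : AddMonoidAlgebra (ZMod p) G := ∑ s ∈ S, AddMonoidAlgebra.single s 1 with ha_def
  have ha : a ^ p = ∑ s ∈ S, AddMonoidAlgebra.single (p • s) (1 : ZMod p) := by
    haveI : ExpChar (AddMonoidAlgebra (ZMod p) G) p := .prime hp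
    rw [ha_def, sum_pow_char]
    exact Finset.sum_congr rfl fun s _ => by rw [AddMonoidAlgebra.single_pow, one_pow]
  have hcoeff : ∀ d : G, (a ^ p).coeff d = ((S.filter fun t => p • t = d).card : ZMod p) := by
    intro d
    rw [ha, AddMonoidAlgebra.coeff_sum, Finsupp.finset_sum_apply, Finset.card_filter, Nat.cast_sum]
    refine Finset.sum_congr rfl fun s _ => ?_
    rw [AddMonoidAlgebra.coeff_single, Finsupp.single_apply]
    split <;> simp_all
  have hne : ∀ d : G, (a ^ p).coeff d ≠ 0 ↔ d ∈ (fun s => p • s) '' (S : Set G) := by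
    intro d
    rw [hcoeff]
    constructor
    · intro hnz
      by_contra hd
      apply hnz
      have he : (S.filter fun t => p • t = d) = ∅ :=
        Finset.filter_eq_empty_iff.mpr fun t ht hpt => hd ⟨t, ht, hpt⟩
      simp [he]
    · rintro ⟨s, hs, rfl⟩
      intro h0'
      exact hfib s hs ((ZMod.natCast_eq_zero_iff _ _).mp h0')
  have hrec : ∀ (n : ℕ) (g h : G), (a ^ (n + 1)).coeff (h - g) =
      ∑ k : G, if (cayleyGraph (S : Set G)).Adj g k then (a ^ n).coeff (h - k) else 0 := by
    intro n g h
    have h1 : (a ^ (n + 1)).coeff (h - g) = ∑ s ∈ S, (a ^ n).coeff (h - g - s) := by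
      rw [pow_succ', ha_def, Finset.sum_mul, AddMonoidAlgebra.coeff_sum, Finsupp.finset_sum_apply]
      refine Finset.sum_congr rfl fun s hs => ?_
      rw [AddMonoidAlgebra.coeff_single_mul_apply, one_mul]
      congr 1
      abel
    rw [h1]
    have h2 : ∑ s ∈ S, (a ^ n).coeff (h - g - s) = ∑ s : G, if s ∈ S then (a ^ n).coeff (h - g - s) else 0 := by
      rw [Finset.sum_ite_mem, Finset.univ_inter]
    rw [h2]
    refine Fintype.sum_equiv (Equiv.addLeft g) _ _ fun s => ?_
    have hAdj : (cayleyGraph (S : Set G)).Adj g (g + s) ↔ s ∈ S := by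
      rw [cayley_adj_iff _ (by exact_mod_cast hSsym) (by exact_mod_cast hS0)]
      simp
    simp [Equiv.coe_addLeft, hAdj, sub_add_eq_sub_sub]
  have hinv : ∀ (n : ℕ) (g h : G), (a ^ n).coeff (φ h - φ g) = (a ^ n).coeff (h - g) := by
    intro n
    induction n with
    | zero =>
      intro g h
      have : ((1 : AddMonoidAlgebra (ZMod p) G).coeff : G → ZMod p) =
          fun d => if (0 : G) = d then 1 else 0 := by
        funext d
        rw [AddMonoidAlgebra.one_def, AddMonoidAlgebra.coeff_single, Finsupp.single_apply]
      simp only [pow_zero, this]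
      by_cases hgh : g = h
      · simp [hgh]
      · rw [if_neg, if_neg]
        · intro hd; exact hgh (sub_eq_zero.mp hd.symm).symm
        · intro hd
          exact hgh (φ.injective (sub_eq_zero.mp hd.symm)).symm
    | succ n ih =>
      intro g h
      rw [hrec n g h, hrec n (φ g) (φ h)]
      refine Fintype.sum_equiv φ.toEquiv.symm _ _ fun k => ?_
      obtain ⟨k', rfl⟩ : ∃ k', k = φ.toEquiv k' :=
        ⟨φ.toEquiv.symm k, (φ.toEquiv.apply_symm_apply k).symm⟩
      simp only [Equiv.symm_apply_apply]
      rw [show (φ.toEquiv k' : G) = φ k' from rfl, φ.map_adj_iff, ih]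
  intro g h
  have hpSsym : ∀ x ∈ (fun s => p • s) '' (S : Set G), -x ∈ (fun s => p • s) '' (S : Set G) := by
    rintro x ⟨s, hs, rfl⟩
    exact ⟨-s, hSsym s hs, by simp⟩
  rw [cayley_adj_iff _ hpSsym h0, cayley_adj_iff _ hpSsym h0, ← hne, ← hne, hinv p]
end

section
/- Let p be a prime, and let S be a symmetric subset of ℤ_p = ℤ/pℤ with 0 ∉ S, such that the Cayley graph X = Cay(ℤ_p;S) is connected and edge-transitive. Then for every unit k ∈ ℤ_p^×, either kS = S or kS ∩ S = ∅, where kS = {ks : s ∈ S}. (In other words, S is a block of imprimitivity for the regular action of the multiplicative group ℤ_p^× on itself.) -/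
open Polynomial Finset

section Aux
variable {p : ℕ} [hp : Fact p.Prime] {ζ : ℂ}

private lemma aux_pow_mod (hζ : IsPrimitiveRoot ζ p) (m : ℕ) : ζ ^ (m % p) = ζ ^ m := by
  conv_rhs => rw [← Nat.div_add_mod m p]
  rw [pow_add, pow_mul, hζ.pow_eq_one, one_pow, one_mul]

private lemma aux_e_add (hζ : IsPrimitiveRoot ζ p) (x y : ZMod p) :
    ζ ^ (x + y).val = ζ ^ x.val * ζ ^ y.val := by
  haveI : NeZero p := ⟨hp.out.ne_zero⟩
  rw [ZMod.val_add, aux_pow_mod hζ, pow_add]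

private lemma aux_sum_univ (hζ : IsPrimitiveRoot ζ p) : ∑ x : ZMod p, ζ ^ x.val = 0 := by
  haveI : NeZero p := ⟨hp.out.ne_zero⟩
  rw [show ∑ x : ZMod p, ζ ^ x.val = ∑ i ∈ Finset.range p, ζ ^ i from
    Finset.sum_nbij' (fun x => x.val) (fun i => (i : ZMod p))
      (fun x _ => Finset.mem_range.2 (ZMod.val_lt x)) (fun i _ => Finset.mem_univ _)
      (fun x _ => by simp [ZMod.natCast_val, ZMod.cast_id])
      (fun i hi => ZMod.val_cast_of_lt (Finset.mem_range.1 hi)) (fun x _ => rfl)]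
  exact hζ.geom_sum_eq_zero hp.out.one_lt

private lemma aux_sum_char (hζ : IsPrimitiveRoot ζ p) {a : ZMod p} (ha : a ≠ 0) :
    ∑ x : ZMod p, ζ ^ (a * x).val = 0 := by
  rw [show ∑ x : ZMod p, ζ ^ (a * x).val = ∑ x : ZMod p, ζ ^ x.val from
    Fintype.sum_bijective (fun x => a * x) (Equiv.mulLeft₀ a ha).bijective _ _ (fun x => rfl)]
  exact aux_sum_univ hζ

private lemma aux_sum_char' (hζ : IsPrimitiveRoot ζ p) (x : ZMod p) :
    ∑ a : ZMod p, ζ ^ (a * x).val = if x = 0 then (p : ℂ) else 0 := by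
  split_ifs with h
  · subst h; simp
  · rw [show ∑ a : ZMod p, ζ ^ (a * x).val = ∑ a : ZMod p, ζ ^ (x * a).val by
      simp [mul_comm]]
    exact aux_sum_char hζ h

private lemma aux_li (hζ : IsPrimitiveRoot ζ p) (v : ZMod p → ℤ)
    (hv : ∑ x : ZMod p, (v x : ℂ) * ζ ^ x.val = 0) (x y : ZMod p) : v x = v y := by
  haveI : NeZero p := ⟨hp.out.ne_zero⟩
  set g : ℚ[X] := ∑ x : ZMod p, Polynomial.C ((v x : ℚ)) * X ^ x.val with hg
  have hgz : Polynomial.aeval ζ g = 0 := by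
    rw [hg, map_sum]
    rw [show (0 : ℂ) = ∑ x : ZMod p, (v x : ℂ) * ζ ^ x.val from hv.symm]
    refine Finset.sum_congr rfl fun x _ => ?_
    rw [map_mul, map_pow, aeval_X, aeval_C]
    norm_cast
  have hdvd : cyclotomic p ℚ ∣ g := by
    rw [cyclotomic_eq_minpoly_rat hζ hp.out.pos]
    exact minpoly.dvd ℚ ζ hgz
  have hcoeff : ∀ n : ℕ, n < p → g.coeff n = (v ((n : ZMod p)) : ℚ) := by
    intro n hn
    rw [hg, Polynomial.finset_sum_coeff]
    rw [Finset.sum_eq_single ((n : ZMod p))]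
    · rw [Polynomial.coeff_C_mul, Polynomial.coeff_X_pow, ZMod.val_cast_of_lt hn,
        if_pos rfl, mul_one]
    · intro b _ hb
      rw [Polynomial.coeff_C_mul, Polynomial.coeff_X_pow, if_neg, mul_zero]
      intro hbn
      refine hb ?_
      rw [hbn]
      simp [ZMod.natCast_val, ZMod.cast_id]
    · intro h; exact absurd (Finset.mem_univ _) h
  have hdeg : g.degree < (p : ℕ) := by
    rw [hg]
    refine lt_of_le_of_lt (Polynomial.degree_sum_le _ _) ?_
    rw [Finset.sup_lt_iff (by exact_mod_cast WithBot.bot_lt_coe (p:ℕ))]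
    intro x _
    refine lt_of_le_of_lt (Polynomial.degree_C_mul_X_pow_le _ _) ?_
    exact_mod_cast ZMod.val_lt x
  obtain ⟨h, hgh⟩ := hdvd
  have key : ∀ a b : ZMod p, g.coeff a.val = g.coeff b.val := by
    by_cases h0 : h = 0
    · intro a b; rw [hgh, h0, mul_zero]; simp
    · have hcy : (cyclotomic p ℚ).natDegree = p - 1 := by
        rw [natDegree_cyclotomic, Nat.totient_prime hp.out]
      have hdegh : h.natDegree = 0 := by
        have hgne : g ≠ 0 := by
          intro hz; rw [hz] at hgh
          rcases mul_eq_zero.1 hgh.symm with h1 | h1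
          · exact (cyclotomic_ne_zero p ℚ) h1
          · exact h0 h1
        have := Polynomial.natDegree_mul (cyclotomic_ne_zero p ℚ) h0
        rw [← hgh] at this
        have hgnat : g.natDegree < p := by
          rwa [← Polynomial.natDegree_lt_iff_degree_lt hgne] at hdeg
        omega
      obtain ⟨c, rfl⟩ := Polynomial.natDegree_eq_zero.1 hdegh
      intro a b
      rw [hgh, cyclotomic_prime ℚ p]
      have : ∀ n : ℕ, n < p → ((∑ i ∈ Finset.range p, (X:ℚ[X]) ^ i) * C c).coeff n = c := by
        intro n hn
        rw [Polynomial.coeff_mul_C, Polynomial.finset_sum_coeff]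
        rw [Finset.sum_eq_single n]
        · simp
        · intro b _ hb; rw [Polynomial.coeff_X_pow, if_neg (Ne.symm hb)]
        · intro hn'; exact absurd (Finset.mem_range.2 hn) hn'
      rw [this _ (ZMod.val_lt a), this _ (ZMod.val_lt b)]
  have := key x y
  rw [hcoeff _ (ZMod.val_lt x), hcoeff _ (ZMod.val_lt y)] at this
  simp only [ZMod.natCast_val, ZMod.cast_id] at this
  exact_mod_cast this

private lemma aux_finset_eq (hζ : IsPrimitiveRoot ζ p) (A B : Finset (ZMod p))
    (h0 : ((0:ZMod p) ∈ A ↔ (0:ZMod p) ∈ B))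
    (h : ∑ x ∈ A, ζ ^ x.val = ∑ x ∈ B, ζ ^ x.val) : A = B := by
  set v : ZMod p → ℤ := fun x => (if x ∈ A then 1 else 0) - (if x ∈ B then 1 else 0) with hvdef
  have hv : ∑ x : ZMod p, (v x : ℂ) * ζ ^ x.val = 0 := by
    have : ∀ x : ZMod p, (v x : ℂ) * ζ ^ x.val =
        (if x ∈ A then ζ ^ x.val else 0) - (if x ∈ B then ζ ^ x.val else 0) := by
      intro x; rw [hvdef]; push_cast; rw [sub_mul]; congr 1 <;> split_ifs <;> simp
    rw [Finset.sum_congr rfl fun x _ => this x, Finset.sum_sub_distrib]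
    rw [Finset.sum_ite_mem, Finset.sum_ite_mem, Finset.univ_inter, Finset.univ_inter, h,
      sub_self]
  have hconst := aux_li hζ v hv
  have hv0 : v 0 = 0 := by
    by_cases hh : (0:ZMod p) ∈ A
    · simp [hvdef, hh, h0.1 hh]
    · simp [hvdef, hh, (show (0:ZMod p) ∉ B from fun hb => hh (h0.2 hb))]
  ext z
  have := hconst z 0
  rw [hv0, hvdef] at this
  by_cases hA : z ∈ A <;> by_cases hB : z ∈ B <;> simp [hA, hB] at this ⊢

end Aux

/-- For a connected, edge-transitive Cayley graph on `ℤ/p` (`p` prime), the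
connection set `S` satisfies: for every unit `k`, either `kS = S` or
`kS ∩ S = ∅`. -/
theorem cayley_zmod_edgeTransitive_block (p : ℕ) (hp : p.Prime)
    (S : Set (ZMod p)) (hSsym : ∀ s ∈ S, -s ∈ S) (hS0 : (0 : ZMod p) ∉ S)
    (hconn : (cayleyGraph S).Connected)
    (hedge : ∀ e ∈ (cayleyGraph S).edgeSet, ∀ f ∈ (cayleyGraph S).edgeSet,
      ∃ φ : cayleyGraph S ≃g cayleyGraph S, Sym2.map (⇑φ) e = f) :
    ∀ k : (ZMod p)ˣ,
      (fun s => (k : ZMod p) * s) '' S = S ∨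
        ((fun s => (k : ZMod p) * s) '' S) ∩ S = ∅ := by
  haveI hfp : Fact p.Prime := ⟨hp⟩
  haveI : NeZero p := ⟨hp.ne_zero⟩
  classical
  intro k
  by_cases hdisj : ((fun s => (k : ZMod p) * s) '' S) ∩ S = ∅
  · exact Or.inr hdisj
  left
  obtain ⟨t, ht⟩ := Set.nonempty_iff_ne_empty.2 hdisj
  obtain ⟨⟨s, hs, rfl⟩, ht2⟩ := ht
  -- basic facts
  have hk0 : (k : ZMod p) ≠ 0 := k.ne_zero
  have hs0 : s ≠ 0 := fun h => hS0 (h ▸ hs)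
  have hks0 : (k : ZMod p) * s ≠ 0 := mul_ne_zero hk0 hs0
  -- root of unity
  set ζ : ℂ := Complex.exp (2 * Real.pi * Complex.I / p) with hζdef
  have hζ : IsPrimitiveRoot ζ p := Complex.isPrimitiveRoot_exp p hp.ne_zero
  set Sf : Finset (ZMod p) := (Set.toFinite S).toFinset with hSfdef
  have hmemSf : ∀ x, x ∈ Sf ↔ x ∈ S := fun x => Set.Finite.mem_toFinset _
  set lam : ZMod p → ℂ := fun a => ∑ u ∈ Sf, ζ ^ ((a * u).val) with hlam
  set H : Finset (ZMod p) := Finset.univ.filter (fun a => lam a = lam 1) with hHdef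
  set F : ZMod p → ℂ := fun x => ∑ a ∈ H, ζ ^ ((a * x).val) with hFdef
  -- final step : lam k = lam 1 → image = S
  have final : lam (k : ZMod p) = lam 1 → (fun s => (k : ZMod p) * s) '' S = S := by
    intro hlk
    have himg : Sf.image (fun u => (k : ZMod p) * u) = Sf := by
      apply aux_finset_eq hζ
      · have h0B : (0:ZMod p) ∉ Sf := fun h => hS0 ((hmemSf 0).1 h)
        have h0A : (0:ZMod p) ∉ Sf.image (fun u => (k : ZMod p) * u) := by
          intro h
          obtain ⟨a, ha, hae⟩ := Finset.mem_image.1 h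
          rcases mul_eq_zero.1 hae with h1 | h1
          · exact hk0 h1
          · exact h0B (h1 ▸ ha)
        exact iff_of_false h0A h0B
      · rw [Finset.sum_image (fun a _ b _ h => mul_left_cancel₀ hk0 h)]
        have h1 : ∑ x ∈ Sf, ζ ^ (((k:ZMod p) * x).val) = lam (k:ZMod p) := rfl
        rw [h1, hlk, hlam]
        simp [one_mul]
    ext x
    constructor
    · rintro ⟨u, huS, rfl⟩
      have : (k:ZMod p) * u ∈ Sf := by
        rw [← himg]; exact Finset.mem_image_of_mem _ ((hmemSf u).2 huS)
      exact (hmemSf _).1 this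
    · intro hxS
      have hx' : x ∈ Sf.image (fun u => (k : ZMod p) * u) := by
        rw [himg]; exact (hmemSf x).2 hxS
      obtain ⟨u, huSf, rfl⟩ := Finset.mem_image.1 hx'
      exact ⟨u, (hmemSf u).1 huSf, rfl⟩
  -- adjacency characterization
  have hadj : ∀ x y : ZMod p, (cayleyGraph S).Adj x y ↔ y - x ∈ S := by
    intro x y
    constructor
    · rintro ⟨-, -, h⟩; exact h
    · intro h
      refine ⟨?_, ?_, h⟩
      · rintro rfl; rw [sub_self] at h; exact hS0 h
      · have := hSsym _ h; rwa [neg_sub] at this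
  -- get an automorphism fixing 0 and sending s to k*s
  have he1 : s(0, s) ∈ (cayleyGraph S).edgeSet := by
    rw [SimpleGraph.mem_edgeSet, hadj]; simpa using hs
  have he2 : s((0:ZMod p), (k:ZMod p) * s) ∈ (cayleyGraph S).edgeSet := by
    rw [SimpleGraph.mem_edgeSet, hadj]; simpa using ht2
  obtain ⟨φ0, hφ0⟩ := hedge _ he1 _ he2
  rw [Sym2.map_pair_eq, Sym2.eq_iff] at hφ0
  have hsymmS : ∀ x y : ZMod p, x - y ∈ S ↔ y - x ∈ S := by
    intro x y
    constructor <;> intro h <;> · have := hSsym _ h; rwa [neg_sub] at this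
  obtain ⟨φ, hφz, hφs⟩ :
      ∃ φ : cayleyGraph S ≃g cayleyGraph S, φ 0 = 0 ∧ φ s = (k:ZMod p) * s := by
    have refl_iso : ∀ c : ZMod p,
        ∃ ν : cayleyGraph S ≃g cayleyGraph S, ∀ x, ν x = c - x := by
      intro c
      refine ⟨⟨Equiv.mk (fun x => c - x) (fun x => c - x)
        (fun x => sub_sub_cancel c x) (fun x => sub_sub_cancel c x), ?_⟩, fun x => rfl⟩
      intro a b
      show (cayleyGraph S).Adj (c - a) (c - b) ↔ (cayleyGraph S).Adj a b
      rw [hadj, hadj, show (c - b) - (c - a) = a - b by ring]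
      exact hsymmS a b
    rcases hφ0 with ⟨h1, h2⟩ | ⟨h1, h2⟩
    · exact ⟨φ0, h1, h2⟩
    · obtain ⟨ν, hν⟩ := refl_iso ((k:ZMod p) * s)
      refine ⟨φ0.trans ν, ?_, ?_⟩
      · show ν (φ0 0) = 0
        rw [h1, hν, sub_self]
      · show ν (φ0 s) = (k:ZMod p) * s
        rw [h2, hν, sub_zero]
  -- the adjacency operator
  set Mlin : Module.End ℂ (ZMod p → ℂ) :=
    { toFun := fun g x => ∑ u ∈ Sf, g (x + u),
      map_add' := by intro g h; funext x; simp [Finset.sum_add_distrib],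
      map_smul' := by intro c g; funext x; simp [Finset.mul_sum] } with hMdef
  set P : Module.End ℂ (ZMod p → ℂ) :=
    { toFun := fun g x => g (φ x),
      map_add' := by intro g h; rfl,
      map_smul' := by intro c g; rfl } with hPdef
  have hMapp : ∀ (g : ZMod p → ℂ) (x : ZMod p), Mlin g x = ∑ u ∈ Sf, g (x + u) :=
    fun g x => rfl
  have hPapp : ∀ (g : ZMod p → ℂ) (x : ZMod p), P g x = g (φ x) := fun g x => rfl
  have hMP : Commute P Mlin := by
    apply LinearMap.ext; intro g; funext x
    show P (Mlin g) x = Mlin (P g) x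
    rw [hPapp, hMapp, hMapp]
    refine Finset.sum_nbij' (fun u => φ.symm (φ x + u) - x) (fun u => φ (x + u) - φ x)
      ?_ ?_ ?_ ?_ ?_
    · intro u hu
      have hadj1 : (cayleyGraph S).Adj (φ x) (φ x + u) := by
        rw [hadj, add_sub_cancel_left]
        exact (hmemSf u).1 hu
      have hadj2 : (cayleyGraph S).Adj x (φ.symm (φ x + u)) := by
        have h3 := (SimpleGraph.Iso.map_adj_iff φ.symm).2 hadj1
        rwa [φ.symm_apply_apply] at h3
      exact (hmemSf _).2 ((hadj _ _).1 hadj2)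
    · intro u hu
      have hadj1 : (cayleyGraph S).Adj x (x + u) := by
        rw [hadj, add_sub_cancel_left]
        exact (hmemSf u).1 hu
      have hadj2 : (cayleyGraph S).Adj (φ x) (φ (x + u)) :=
        (SimpleGraph.Iso.map_adj_iff φ).2 hadj1
      exact (hmemSf _).2 ((hadj _ _).1 hadj2)
    · intro u _
      show φ (x + (φ.symm (φ x + u) - x)) - φ x = u
      have h4 : x + (φ.symm (φ x + u) - x) = φ.symm (φ x + u) := by ring
      rw [h4, φ.apply_symm_apply]
      ring
    · intro u _
      show φ.symm (φ x + (φ (x + u) - φ x)) - x = u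
      have h4 : φ x + (φ (x + u) - φ x) = φ (x + u) := by ring
      rw [h4, φ.symm_apply_apply]
      ring
    · intro u _
      show g (φ x + u) = g (φ (x + (φ.symm (φ x + u) - x)))
      congr 1
      have h4 : x + (φ.symm (φ x + u) - x) = φ.symm (φ x + u) := by ring
      rw [h4, φ.apply_symm_apply]
  -- eigenvectors
  set psi : ZMod p → (ZMod p → ℂ) := fun a x => ζ ^ ((a * x).val) with hpsidef
  have heig : ∀ a : ZMod p, Mlin (psi a) = lam a • psi a := by
    intro a; funext x
    rw [hMapp]
    show ∑ u ∈ Sf, ζ ^ ((a * (x + u)).val) = lam a • (fun x => ζ ^ ((a * x).val)) x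
    have h5 : ∀ u, ζ ^ ((a * (x + u)).val) = ζ ^ ((a * x).val) * ζ ^ ((a * u).val) := by
      intro u; rw [mul_add, aux_e_add hζ]
    rw [Finset.sum_congr rfl fun u _ => h5 u, ← Finset.mul_sum]
    show ζ ^ (a * x).val * (∑ u ∈ Sf, ζ ^ ((a*u).val)) = lam a * ζ ^ ((a * x).val)
    rw [hlam]
    ring
  have hpsine : ∀ a : ZMod p, psi a ≠ 0 := by
    intro a h
    have h6 := congrFun h 0
    simp [hpsidef] at h6
  have heigvec : ∀ a : ZMod p, Mlin.HasEigenvector (lam a) (psi a) :=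
    fun a => ⟨Module.End.mem_eigenspace_iff.2 (heig a), hpsine a⟩
  -- the polynomial
  set T : Finset ℂ := (Finset.univ.image lam).erase (lam 1) with hTdef
  set q : Polynomial ℂ := ∏ μ ∈ T, (Polynomial.X - Polynomial.C μ) with hqdef
  set c : ℂ := ∏ μ ∈ T, (lam 1 - μ) with hcdef
  have hc : c ≠ 0 := by
    rw [hcdef]
    refine Finset.prod_ne_zero_iff.2 (fun μ hμ => sub_ne_zero_of_ne ?_)
    exact Ne.symm (Finset.ne_of_mem_erase hμ)
  have hqeval : ∀ a : ZMod p, q.eval (lam a) = if lam a = lam 1 then c else 0 := by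
    intro a
    rw [hqdef, Polynomial.eval_prod]
    split_ifs with h
    · rw [h, hcdef]
      refine Finset.prod_congr rfl fun μ _ => ?_
      simp
    · refine Finset.prod_eq_zero (i := lam a) ?_ ?_
      · exact Finset.mem_erase.2 ⟨h, Finset.mem_image_of_mem lam (Finset.mem_univ a)⟩
      · simp
  have hPQ : Commute P (Polynomial.aeval Mlin q) := by
    induction q using Polynomial.induction_on' with
    | add f g hf hg => rw [map_add]; exact hf.add_right hg
    | monomial n a =>
      rw [Polynomial.aeval_monomial]
      have h1 : Commute P ((algebraMap ℂ (Module.End ℂ (ZMod p → ℂ))) a) :=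
        (Algebra.commutes a P).symm
      exact h1.mul_right (hMP.pow_right n)
  -- delta function
  set δ : ZMod p → ℂ := fun x => if x = 0 then 1 else 0 with hδdef
  have hpne : (p : ℂ) ≠ 0 := Nat.cast_ne_zero.2 hp.ne_zero
  have hδ : δ = (p : ℂ)⁻¹ • ∑ a : ZMod p, psi a := by
    funext x
    have h7 : (∑ a : ZMod p, psi a) x = ∑ a : ZMod p, ζ ^ ((a * x).val) := by
      rw [Finset.sum_apply]
    show δ x = (p : ℂ)⁻¹ * (∑ a : ZMod p, psi a) x
    rw [h7, aux_sum_char' hζ x, hδdef]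
    split_ifs with h
    · rw [inv_mul_cancel₀ hpne]; simp [h]
    · rw [mul_zero]; simp [h]
  have hFsum : F = ∑ a ∈ H, psi a := by
    funext x
    rw [hFdef, Finset.sum_apply]
  have hQδ : (Polynomial.aeval Mlin q) δ = ((p:ℂ)⁻¹ * c) • F := by
    rw [hδ, map_smul, map_sum]
    rw [Finset.sum_congr rfl
      (fun a _ => Module.End.aeval_apply_of_hasEigenvector (heigvec a))]
    have h8 : ∑ a : ZMod p, q.eval (lam a) • psi a = ∑ a ∈ H, c • psi a := by
      rw [Finset.sum_congr rfl (fun a _ => by rw [hqeval a, ite_smul, zero_smul])]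
      rw [← Finset.sum_filter, hHdef]
    rw [h8, ← Finset.smul_sum, ← hFsum, smul_smul]
  have hPδ : P δ = δ := by
    funext x
    rw [hPapp]
    show (if φ x = 0 then (1:ℂ) else 0) = if x = 0 then 1 else 0
    by_cases hx : x = 0
    · rw [if_pos hx, if_pos (by rw [hx, hφz])]
    · have h9 : φ x ≠ 0 := fun h => hx (φ.injective (h.trans hφz.symm))
      rw [if_neg h9, if_neg hx]
  have hPQδ : P ((Polynomial.aeval Mlin q) δ) = (Polynomial.aeval Mlin q) δ := by
    calc P ((Polynomial.aeval Mlin q) δ) = (P * (Polynomial.aeval Mlin q)) δ := rfl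
      _ = ((Polynomial.aeval Mlin q) * P) δ := by rw [hPQ.eq]
      _ = (Polynomial.aeval Mlin q) (P δ) := rfl
      _ = (Polynomial.aeval Mlin q) δ := by rw [hPδ]
  rw [hQδ, map_smul] at hPQδ
  have hscal : (p:ℂ)⁻¹ * c ≠ 0 := mul_ne_zero (inv_ne_zero hpne) hc
  have hPF : P F = F := by
    funext x
    have h10 := congrFun hPQδ x
    simp only [Pi.smul_apply, smul_eq_mul] at h10
    exact mul_left_cancel₀ hscal h10
  have hFk : F ((k:ZMod p) * s) = F s := by
    have h11 := congrFun hPF s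
    rw [hPapp, hφs] at h11
    exact h11
  -- conclude lam k = lam 1
  have h1H : (1 : ZMod p) ∈ H := Finset.mem_filter.2 ⟨Finset.mem_univ _, rfl⟩
  have hkH : (k : ZMod p) ∈ H := by
    have himg : H.image (fun a => a * ((k:ZMod p) * s)) = H.image (fun a => a * s) := by
      apply aux_finset_eq hζ
      · constructor
        · intro h
          obtain ⟨a, haH, hae⟩ := Finset.mem_image.1 h
          have : a = 0 := by
            rcases mul_eq_zero.1 hae with h1 | h1
            · exact h1
            · exact absurd h1 hks0
          refine Finset.mem_image.2 ⟨0, this ▸ haH, by rw [zero_mul]⟩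
        · intro h
          obtain ⟨a, haH, hae⟩ := Finset.mem_image.1 h
          have : a = 0 := by
            rcases mul_eq_zero.1 hae with h1 | h1
            · exact h1
            · exact absurd h1 hs0
          refine Finset.mem_image.2 ⟨0, this ▸ haH, by rw [zero_mul]⟩
      · rw [Finset.sum_image (fun a _ b _ h => mul_right_cancel₀ hks0 h),
          Finset.sum_image (fun a _ b _ h => mul_right_cancel₀ hs0 h)]
        have e1 : ∑ a ∈ H, ζ ^ ((a * ((k:ZMod p) * s)).val) = F ((k:ZMod p) * s) := rfl
        have e2 : ∑ a ∈ H, ζ ^ ((a * s).val) = F s := rfl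
        rw [e1, e2, hFk]
    have hmem : (k:ZMod p) * s ∈ H.image (fun a => a * s) := by
      rw [← himg]
      exact Finset.mem_image.2 ⟨1, h1H, by rw [one_mul]⟩
    obtain ⟨a, haH, hae⟩ := Finset.mem_image.1 hmem
    have : a = (k : ZMod p) := mul_right_cancel₀ hs0 hae
    exact this ▸ haH
  exact final (Finset.mem_filter.1 hkH).2
end

section
/- Let X be a twin-free simple graph, and let φ be an automorphism of the canonical bipartite double cover BX such that φ(v,0) = (v,0) for every vertex v of X. Then φ is the identity automorphism of BX. -/
/-- If `X` is twin-free and an automorphism of the canonical double cover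
fixes every vertex of the layer `V(X) × {0}`, then it is the identity. -/
theorem doubleCover_aut_fix_layer_eq_id {V : Type*} (X : SimpleGraph V)
    (htf : ∀ v w : V, X.neighborSet v = X.neighborSet w → v = w)
    (φ : doubleCover X ≃g doubleCover X)
    (hφ : ∀ v : V, φ (v, (0 : ZMod 2)) = (v, 0)) :
    ∀ a : V × ZMod 2, φ a = a := by
  rintro ⟨v, i⟩
  fin_cases i
  · exact hφ v
  · rcases h : φ (v, 1) with ⟨w, j⟩
    have hj : j = 1 := by
      fin_cases j
      · exfalso
        have : ((v, 1) : V × ZMod 2) = (w, 0) := φ.injective (by rw [h, hφ w]; rfl)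
        exact one_ne_zero (congrArg Prod.snd this)
      · rfl
    subst hj
    have hw : w = v := by
      apply htf
      ext u
      have hiff : (doubleCover X).Adj (φ (v, 1)) (φ (u, 0)) ↔
          (doubleCover X).Adj (v, 1) (u, 0) := φ.map_adj_iff
      rw [h, hφ u] at hiff
      simp only [doubleCover, SimpleGraph.mem_neighborSet] at hiff ⊢
      constructor
      · intro ha; exact ((hiff.mp ⟨ha, one_ne_zero⟩).1)
      · intro ha; exact ((hiff.mpr ⟨ha, one_ne_zero⟩).1)
    rw [hw] at h
    exact h
end

section
/- Let G be a finite abelian group of odd order, let S be a symmetric subset of G with 0 ∉ S, and let X = Cay(G;S). Identify the canonical bipartite double cover BX with the Cayley graph Cay(G × ℤ₂; S × {1}), i.e., (v,i) is adjacent to (w,j) if and only if i ≠ j and v − w ∈ S. If φ is an automorphism of BX with φ(G × {0}) = G × {0}, then the map ψ: G → G defined by φ(v,0) = (ψ(v),0) is an automorphism of X. -/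
/- ### Auxiliary material for the proof -/

set_option linter.unusedSectionVars false

/-- Mod-2 counting with an involution: the cardinality of a finite type is congruent
mod 2 to the number of fixed points of any involution. -/
private lemma Nat.card_modEq_card_fixed {α : Type*} [Finite α] (f : α → α)
    (hf : Function.Involutive f) :
    Nat.card α ≡ Nat.card {a : α // f a = a} [MOD 2] := by
  classical
  cases nonempty_fintype α
  rw [Nat.card_eq_fintype_card, Nat.card_eq_fintype_card, Fintype.card_subtype]
  have hsplit := Finset.card_filter_add_card_filter_not
    (s := (Finset.univ : Finset α)) (p := fun a => f a = a)
  rw [Finset.card_univ] at hsplit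
  have heven : ((Finset.univ.filter (fun a => ¬ f a = a)).card : ZMod 2) = 0 := by
    have h0 : ∑ _x ∈ Finset.univ.filter (fun a => ¬ f a = a), (1 : ZMod 2) = 0 := by
      refine Finset.sum_involution (fun a _ => f a) (fun a ha => by decide)
        (fun a ha h1 => ?_) (fun a ha => ?_) (fun a ha => hf a)
      · simpa using (Finset.mem_filter.mp ha).2
      · have ha' := (Finset.mem_filter.mp ha).2
        simp only [Finset.mem_filter, Finset.mem_univ, true_and]
        rw [hf a]
        exact fun h => ha' h.symm
    rwa [Finset.sum_const, nsmul_eq_mul, mul_one] at h0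
  have hdvd : 2 ∣ (Finset.univ.filter (fun a => ¬ f a = a)).card :=
    (ZMod.natCast_eq_zero_iff _ 2).mp heven
  obtain ⟨k, hk⟩ := hdvd
  show _ % 2 = _ % 2
  omega

section CayleyAux

variable {G : Type*} [AddCommGroup G] [Fintype G]

/-- Number of `m`-tuples of elements of `S` summing to `z` (i.e. walk counts in the
Cayley graph). -/
private noncomputable def tupCount (S : Set G) (m : ℕ) (z : G) : ℕ :=
  Nat.card {t : Fin m → G // (∀ i, t i ∈ S) ∧ ∑ i, t i = z}

private lemma tupCount_one_mem {S : Set G} {z : G} (hz : z ∈ S) : tupCount S 1 z = 1 := by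
  have : Unique {t : Fin 1 → G // (∀ i, t i ∈ S) ∧ ∑ i, t i = z} := by
    refine ⟨⟨⟨fun _ => z, fun _ => hz, by simp⟩⟩, ?_⟩
    rintro ⟨t, ht, hsum⟩
    ext i
    have hi : i = 0 := Subsingleton.elim _ _
    simp only [hi]
    simpa using hsum
  exact Nat.card_unique

private lemma tupCount_one_not_mem {S : Set G} {z : G} (hz : z ∉ S) : tupCount S 1 z = 0 := by
  have : IsEmpty {t : Fin 1 → G // (∀ i, t i ∈ S) ∧ ∑ i, t i = z} := by
    refine ⟨?_⟩
    rintro ⟨t, ht, hsum⟩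
    apply hz
    have h0 : t 0 = z := by simpa using hsum
    exact h0 ▸ ht 0
  exact Nat.card_of_isEmpty

/-- The halving parity lemma: if doubling is injective, then the number of `(m+m)`-tuples
summing to `x + x` is congruent mod 2 to the number of `m`-tuples summing to `x`. -/
private lemma tupCount_halving {S : Set G} (hdbl : ∀ a b : G, a + a = b + b → a = b)
    (m : ℕ) (x : G) :
    tupCount S (m + m) (x + x) ≡ tupCount S m x [MOD 2] := by
  classical
  set P := {ab : (Fin m → G) × (Fin m → G) //
      ((∀ i, ab.1 i ∈ S) ∧ (∀ i, ab.2 i ∈ S)) ∧ (∑ i, ab.1 i) + (∑ i, ab.2 i) = x + x} with hP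
  have e1 : {t : Fin (m + m) → G // (∀ i, t i ∈ S) ∧ ∑ i, t i = x + x} ≃ P := by
    refine Equiv.subtypeEquiv
      ((finSumFinEquiv.symm.arrowCongr (Equiv.refl G)).trans
        (Equiv.sumArrowEquivProdArrow _ _ G)) (fun t => ?_)
    have hsum : ∑ i, t i =
        (∑ i : Fin m, t (finSumFinEquiv (Sum.inl i))) +
        (∑ i : Fin m, t (finSumFinEquiv (Sum.inr i))) := by
      rw [← Equiv.sum_comp finSumFinEquiv (fun k => t k), Fintype.sum_sum_type]
    simp only [Equiv.trans_apply, Equiv.arrowCongr_apply, Equiv.sumArrowEquivProdArrow,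
      Equiv.coe_fn_mk, Equiv.refl_apply, Equiv.symm_symm, Function.comp]
    constructor
    · rintro ⟨hmem, hs⟩
      exact ⟨⟨fun i => hmem _, fun i => hmem _⟩, by rw [← hsum]; exact hs⟩
    · rintro ⟨⟨hm1, hm2⟩, hs⟩
      constructor
      · intro k
        have hk : k = finSumFinEquiv (finSumFinEquiv.symm k) := (Equiv.apply_symm_apply _ _).symm
        rcases hsk : finSumFinEquiv.symm k with i | i
        · have := hm1 i; rw [hk, hsk]; exact this
        · have := hm2 i; rw [hk, hsk]; exact this
      · rw [hsum]; exact hs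
  have swap_mem : ∀ p : P, ((∀ i, (p.1.2, p.1.1).1 i ∈ S) ∧ (∀ i, (p.1.2, p.1.1).2 i ∈ S)) ∧
      (∑ i, (p.1.2, p.1.1).1 i) + (∑ i, (p.1.2, p.1.1).2 i) = x + x := by
    rintro ⟨⟨a, b⟩, ⟨hm1, hm2⟩, hs⟩
    exact ⟨⟨hm2, hm1⟩, by rw [add_comm]; exact hs⟩
  set sw : P → P := fun p => ⟨(p.1.2, p.1.1), swap_mem p⟩ with hsw
  have hinv : Function.Involutive sw := by
    rintro ⟨⟨a, b⟩, hp⟩; rfl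
  have e2 : {p : P // sw p = p} ≃ {t : Fin m → G // (∀ i, t i ∈ S) ∧ ∑ i, t i = x} := by
    refine ⟨fun q => ⟨q.1.1.1, q.1.2.1.1, ?_⟩, fun s => ⟨⟨(s.1, s.1), ⟨⟨s.2.1, s.2.1⟩, by
        rw [s.2.2]⟩⟩, by apply Subtype.ext; rfl⟩, ?_, ?_⟩
    · have hq := q.2
      have hfix : q.1.1.2 = q.1.1.1 := by
        have := congrArg (fun r => r.1.1) hq
        simpa [hsw] using this
      have hs := q.1.2.2
      rw [hfix] at hs
      exact hdbl _ _ hs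
    · rintro ⟨⟨⟨a, b⟩, hp⟩, hq⟩
      have hfix : b = a := by
        have := congrArg (fun r => r.1.1) hq
        simpa [hsw] using this
      apply Subtype.ext
      apply Subtype.ext
      simp [hfix]
    · rintro ⟨s, hs⟩; rfl
  calc tupCount S (m + m) (x + x) = Nat.card P := Nat.card_congr e1
    _ ≡ Nat.card {p : P // sw p = p} [MOD 2] := Nat.card_modEq_card_fixed sw hinv
    _ = tupCount S m x := Nat.card_congr e2

/-- Transferring walk-tuple counts in `Cay(G × ℤ₂; S × {1})` along a graph automorphism. -/
private lemma tupB_card_le (S : Set G) (hSsym : ∀ s ∈ S, -s ∈ S)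
    (e : cayleyGraph (S ×ˢ {(1 : ZMod 2)}) ≃g cayleyGraph (S ×ˢ {(1 : ZMod 2)}))
    (m : ℕ) (x y : G × ZMod 2) :
    Nat.card {t : Fin m → G // (∀ i, t i ∈ S) ∧ y = x + (∑ i, t i, (m : ZMod 2))} ≤
      Nat.card {t : Fin m → G //
        (∀ i, t i ∈ S) ∧ e y = e x + (∑ i, t i, (m : ZMod 2))} := by
  classical
  set tE : (Fin m → G) → ℕ → G := fun t n => if h : n < m then t ⟨n, h⟩ else 0 with htE
  set pf : (Fin m → G) → ℕ → G × ZMod 2 :=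
    fun t n => x + (∑ i ∈ Finset.range n, tE t i, (n : ZMod 2)) with hpf
  have hp0 : ∀ t, pf t 0 = x := by
    intro t; simp [hpf]
  have hpstep : ∀ t n, pf t (n + 1) = pf t n + (tE t n, 1) := by
    intro t n
    simp only [hpf, Finset.sum_range_succ]
    rw [add_assoc]
    congr 1
    rw [Prod.mk_add_mk]
    congr 1
    push_cast
    ring
  have hsum_eq : ∀ t : Fin m → G, ∑ i ∈ Finset.range m, tE t i = ∑ i, t i := by
    intro t
    rw [← Fin.sum_univ_eq_sum_range (fun n => tE t n) m]
    exact Finset.sum_congr rfl fun i _ => by simp [htE, i.isLt]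
  have hpm : ∀ (t : Fin m → G), pf t m = x + (∑ i, t i, (m : ZMod 2)) := by
    intro t
    simp only [hpf, hsum_eq]
  have hadj : ∀ (t : Fin m → G), (∀ i, t i ∈ S) → ∀ n, n < m →
      (cayleyGraph (S ×ˢ {(1 : ZMod 2)})).Adj (pf t n) (pf t (n + 1)) := by
    intro t ht n hn
    have hmem : tE t n ∈ S := by
      simp only [htE, dif_pos hn]; exact ht _
    refine ⟨?_, ?_, ?_⟩
    · intro h
      rw [hpstep] at h
      have h0 : (tE t n, (1 : ZMod 2)) = 0 := left_eq_add.mp h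
      have h1 : (1 : ZMod 2) = 0 := congrArg Prod.snd h0
      exact one_ne_zero h1
    · rw [hpstep]
      have hre : pf t n - (pf t n + (tE t n, 1)) = (-(tE t n), (-1 : ZMod 2)) := by
        rw [sub_add_eq_sub_sub, sub_self, zero_sub]
        rfl
      rw [hre]
      have h1 : (-1 : ZMod 2) = 1 := by decide
      rw [h1]
      exact ⟨hSsym _ hmem, rfl⟩
    · rw [hpstep, add_sub_cancel_left]
      exact ⟨hmem, rfl⟩
  have hkey : ∀ (t : Fin m → G), (∀ i, t i ∈ S) → ∀ n, n < m →
      (e (pf t (n + 1)) - e (pf t n)).1 ∈ S ∧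
        e (pf t (n + 1)) = e (pf t n) + ((e (pf t (n + 1)) - e (pf t n)).1, 1) := by
    intro t ht n hn
    have hadj2 : (cayleyGraph (S ×ˢ {(1 : ZMod 2)})).Adj (e (pf t n)) (e (pf t (n + 1))) :=
      e.map_adj_iff.mpr (hadj t ht n hn)
    obtain ⟨-, -, hmem2⟩ := hadj2
    obtain ⟨hm1, hm2⟩ := hmem2
    refine ⟨hm1, ?_⟩
    have hm2' : (e (pf t (n + 1)) - e (pf t n)).2 = 1 := hm2
    have hd : e (pf t (n + 1)) - e (pf t n) = ((e (pf t (n + 1)) - e (pf t n)).1, 1) :=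
      Prod.ext_iff.mpr ⟨rfl, hm2'⟩
    rw [← hd]
    abel
  have hq : ∀ (t : Fin m → G), (∀ i, t i ∈ S) → ∀ n, n ≤ m →
      e (pf t n) = e x +
        (∑ i ∈ Finset.range n, (e (pf t (i + 1)) - e (pf t i)).1, (n : ZMod 2)) := by
    intro t ht n
    induction n with
    | zero => intro _; simp [hp0]
    | succ n ih =>
      intro hn1
      have hn : n < m := hn1
      have hih := ih (le_of_lt hn)
      have hsplit : (∑ i ∈ Finset.range (n + 1), (e (pf t (i + 1)) - e (pf t i)).1,
          ((n + 1 : ℕ) : ZMod 2)) =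
          (∑ i ∈ Finset.range n, (e (pf t (i + 1)) - e (pf t i)).1, ((n : ℕ) : ZMod 2)) +
            ((e (pf t (n + 1)) - e (pf t n)).1, 1) := by
        rw [Prod.mk_add_mk, Finset.sum_range_succ]
        congr 1
        push_cast
        ring
      calc e (pf t (n + 1))
          = e (pf t n) + ((e (pf t (n + 1)) - e (pf t n)).1, 1) := (hkey t ht n hn).2
        _ = (e x + (∑ i ∈ Finset.range n, (e (pf t (i + 1)) - e (pf t i)).1,
              ((n : ℕ) : ZMod 2))) + ((e (pf t (n + 1)) - e (pf t n)).1, 1) :=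
            congrArg (fun z => z + ((e (pf t (n + 1)) - e (pf t n)).1, 1)) hih
        _ = e x + ((∑ i ∈ Finset.range n, (e (pf t (i + 1)) - e (pf t i)).1,
              ((n : ℕ) : ZMod 2)) + ((e (pf t (n + 1)) - e (pf t n)).1, 1)) := add_assoc _ _ _
        _ = e x + (∑ i ∈ Finset.range (n + 1), (e (pf t (i + 1)) - e (pf t i)).1,
              ((n + 1 : ℕ) : ZMod 2)) := by rw [hsplit]
  -- the map on tuples
  have hbig : ∀ (t : Fin m → G), ((∀ i, t i ∈ S) ∧ y = x + (∑ i, t i, (m : ZMod 2))) →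
      ((∀ i : Fin m, (e (pf t ((i : ℕ) + 1)) - e (pf t (i : ℕ))).1 ∈ S) ∧
        e y = e x + (∑ i : Fin m, (e (pf t ((i : ℕ) + 1)) - e (pf t (i : ℕ))).1,
          (m : ZMod 2))) := by
    rintro t ⟨ht, hy⟩
    refine ⟨fun i => (hkey t ht i i.isLt).1, ?_⟩
    have hym : pf t m = y := by rw [hpm, ← hy]
    have := hq t ht m le_rfl
    rw [hym] at this
    rw [this]
    congr 2
    exact (Fin.sum_univ_eq_sum_range (fun i => (e (pf t (i + 1)) - e (pf t i)).1) m).symm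
  set Φ : {t : Fin m → G // (∀ i, t i ∈ S) ∧ y = x + (∑ i, t i, (m : ZMod 2))} →
      {t : Fin m → G // (∀ i, t i ∈ S) ∧ e y = e x + (∑ i, t i, (m : ZMod 2))} :=
    fun s => ⟨fun i => (e (pf s.1 ((i : ℕ) + 1)) - e (pf s.1 (i : ℕ))).1,
      hbig s.1 s.2⟩ with hΦ
  have hinj : Function.Injective Φ := by
    rintro ⟨t, ht, hyt⟩ ⟨u, hu, hyu⟩ h
    have hval : ∀ i : Fin m, (e (pf t ((i : ℕ) + 1)) - e (pf t (i : ℕ))).1 =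
        (e (pf u ((i : ℕ) + 1)) - e (pf u (i : ℕ))).1 := by
      intro i
      exact congrFun (congrArg Subtype.val h) i
    have hpeq : ∀ n, n ≤ m → pf t n = pf u n := by
      intro n
      induction n with
      | zero => intro _; rw [hp0, hp0]
      | succ n ih =>
        intro hn1
        have hn : n < m := hn1
        have h1 := (hkey t ht n hn).2
        have h2 := (hkey u hu n hn).2
        have hie : (e (pf t (n + 1)) - e (pf t n)).1 = (e (pf u (n + 1)) - e (pf u n)).1 :=
          hval ⟨n, hn⟩
        have hpn := ih (le_of_lt hn)
        apply e.injective
        rw [h1, h2, hie, hpn]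

    apply Subtype.ext
    funext i
    show t i = u i
    have h1 : pf t ((i : ℕ) + 1) = pf u ((i : ℕ) + 1) := hpeq _ i.isLt
    have h2 : pf t (i : ℕ) = pf u (i : ℕ) := hpeq _ (le_of_lt i.isLt)
    have ht' : t i = (pf t ((i : ℕ) + 1) - pf t (i : ℕ)).1 := by
      rw [hpstep, add_sub_cancel_left]
      simp [htE, i.isLt]
    have hu' : u i = (pf u ((i : ℕ) + 1) - pf u (i : ℕ)).1 := by
      rw [hpstep, add_sub_cancel_left]
      simp [htE, i.isLt]
    rw [ht', hu', h1, h2]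
  exact Nat.card_le_card_of_injective Φ hinj

private lemma tupB_card_eq (S : Set G) (hSsym : ∀ s ∈ S, -s ∈ S)
    (e : cayleyGraph (S ×ˢ {(1 : ZMod 2)}) ≃g cayleyGraph (S ×ˢ {(1 : ZMod 2)}))
    (m : ℕ) (x y : G × ZMod 2) :
    Nat.card {t : Fin m → G // (∀ i, t i ∈ S) ∧ y = x + (∑ i, t i, (m : ZMod 2))} =
      Nat.card {t : Fin m → G //
        (∀ i, t i ∈ S) ∧ e y = e x + (∑ i, t i, (m : ZMod 2))} := by
  refine le_antisymm (tupB_card_le S hSsym e m x y) ?_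
  have h2 := tupB_card_le S hSsym e.symm m (e x) (e y)
  simpa using h2

end CayleyAux

/-- Realizing `BX` as `Cay(G × ℤ₂; S × {1})`: if an automorphism `φ` of `BX`
preserves the layer `G × {0}`, then its restriction to that layer is an
automorphism of `X = Cay(G;S)`. -/
theorem doubleCover_aut_restrict_layer {G : Type*} [AddCommGroup G] [Fintype G]
    (hodd : Odd (Fintype.card G))
    (S : Set G) (hSsym : ∀ s ∈ S, -s ∈ S) (hS0 : (0 : G) ∉ S)
    (φ : cayleyGraph (S ×ˢ {(1 : ZMod 2)}) ≃g cayleyGraph (S ×ˢ {(1 : ZMod 2)}))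
    (hφ : (fun a => φ a) '' ((Set.univ : Set G) ×ˢ {(0 : ZMod 2)}) =
      (Set.univ : Set G) ×ˢ {(0 : ZMod 2)}) :
    ∃ ψ : cayleyGraph S ≃g cayleyGraph S,
      ∀ v : G, φ (v, (0 : ZMod 2)) = (ψ v, (0 : ZMod 2)) := by
  classical
  -- the restriction to the layer
  have hlayer : ∀ v : G, (φ (v, (0 : ZMod 2))).2 = 0 := by
    intro v
    have hv : ((v, (0 : ZMod 2)) : G × ZMod 2) ∈ (Set.univ : Set G) ×ˢ {(0 : ZMod 2)} :=
      ⟨trivial, rfl⟩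
    have hmem : φ (v, (0 : ZMod 2)) ∈ (Set.univ : Set G) ×ˢ {(0 : ZMod 2)} := by
      rw [← hφ]; exact ⟨(v, 0), hv, rfl⟩
    exact hmem.2
  set ψ : G → G := fun v => (φ (v, (0 : ZMod 2))).1 with hψdef
  have hψ : ∀ v : G, φ (v, (0 : ZMod 2)) = (ψ v, (0 : ZMod 2)) := fun v =>
    Prod.ext rfl (hlayer v)
  -- coprimality and doubling
  have hcop : Nat.Coprime 2 (Fintype.card G) := by
    rw [Nat.prime_two.coprime_iff_not_dvd]
    rw [Nat.odd_iff] at hodd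
    omega
  have hdbl : ∀ a b : G, a + a = b + b → a = b := by
    intro a b hab
    have h2 : (2 : ℕ) • (a - b) = 0 := by
      rw [two_nsmul]
      have hx : (a - b) + (a - b) = (a + a) - (b + b) := by abel
      rw [hx, hab, sub_self]
    have hord : addOrderOf (a - b) ∣ 2 := addOrderOf_dvd_of_nsmul_eq_zero h2
    have hcard : addOrderOf (a - b) ∣ Fintype.card G := addOrderOf_dvd_card
    have h1 : addOrderOf (a - b) ∣ 1 := hcop ▸ Nat.dvd_gcd hord hcard
    have h0 : a - b = 0 := AddMonoid.addOrderOf_eq_one_iff.mp (Nat.dvd_one.mp h1)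
    exact sub_eq_zero.mp h0
  -- choose j with 2^j ≡ 1 mod |G|
  haveI : NeZero (Fintype.card G) := ⟨Fintype.card_ne_zero⟩
  set u : (ZMod (Fintype.card G))ˣ := ZMod.unitOfCoprime 2 hcop with hu
  set j := orderOf u with hj_def
  have hjpos : 0 < j := orderOf_pos u
  have hj : (2 : ℕ) ^ j ≡ 1 [MOD Fintype.card G] := by
    have hpow : u ^ j = 1 := pow_orderOf_eq_one u
    have h2 : ((2 : ℕ) : ZMod (Fintype.card G)) ^ j = 1 := by
      have hcoe : ((u : ZMod (Fintype.card G))) = ((2 : ℕ) : ZMod (Fintype.card G)) := by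
        rw [hu]; exact_mod_cast ZMod.coe_unitOfCoprime 2 hcop
      calc ((2 : ℕ) : ZMod (Fintype.card G)) ^ j = (u : ZMod (Fintype.card G)) ^ j := by
            rw [hcoe]
        _ = ((u ^ j : (ZMod (Fintype.card G))ˣ) : ZMod (Fintype.card G)) := by
            rw [Units.val_pow_eq_pow_val]
        _ = 1 := by rw [hpow]; rfl
    have := (ZMod.natCast_eq_natCast_iff (2 ^ j) 1 (Fintype.card G)).mp (by push_cast; exact h2)
    exact this
  have hsmul : ∀ g : G, (2 ^ j) • g = g := by
    intro g
    have hle : 1 ≤ 2 ^ j := Nat.one_le_two_pow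
    obtain ⟨q, hq⟩ := (Nat.modEq_iff_dvd' hle).mp hj.symm
    have h2j : 2 ^ j = Fintype.card G * q + 1 := by omega
    rw [h2j, add_nsmul, one_nsmul, mul_comm, mul_nsmul]
    rw [card_nsmul_eq_zero, zero_add]
  -- parity: tupCount S (2^j) z ≡ [z ∈ S] mod 2
  have hparity : ∀ z : G, tupCount S (2 ^ j) z ≡ tupCount S 1 z [MOD 2] := by
    intro z
    have key : ∀ i : ℕ, tupCount S (2 ^ i) ((2 ^ i) • z) ≡ tupCount S 1 z [MOD 2] := by
      intro i
      induction i with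
      | zero => simpa using Nat.ModEq.refl _
      | succ i ih =>
        have h2 : (2 : ℕ) ^ (i + 1) = 2 ^ i + 2 ^ i := by rw [pow_succ]; ring
        rw [h2, add_nsmul]
        exact (tupCount_halving hdbl (2 ^ i) ((2 ^ i) • z)).trans ih
    have := key j
    rwa [hsmul z] at this
  -- identify layer-pair counts in BX with tupCount
  have hcast0 : ((2 ^ j : ℕ) : ZMod 2) = 0 := by
    rw [ZMod.natCast_eq_zero_iff]
    exact dvd_pow_self 2 hjpos.ne'
  have hident : ∀ a b : G,
      Nat.card {t : Fin (2 ^ j) → G // (∀ i, t i ∈ S) ∧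
        ((b, (0 : ZMod 2)) : G × ZMod 2) = (a, (0 : ZMod 2)) +
          (∑ i, t i, ((2 ^ j : ℕ) : ZMod 2))} = tupCount S (2 ^ j) (b - a) := by
    intro a b
    apply Nat.card_congr
    refine Equiv.subtypeEquivRight (fun t => ?_)
    rw [hcast0]
    constructor
    · rintro ⟨hm, hs⟩
      refine ⟨hm, ?_⟩
      have h1 : b = a + ∑ i, t i := congrArg Prod.fst hs
      rw [h1]; abel
    · rintro ⟨hm, hs⟩
      refine ⟨hm, ?_⟩
      apply Prod.ext
      · show b = a + ∑ i, t i
        rw [hs]; abel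
      · show (0 : ZMod 2) = 0 + 0
        rw [add_zero]
  -- the transfer
  have htrans : ∀ v w : G, tupCount S (2 ^ j) (w - v) = tupCount S (2 ^ j) (ψ w - ψ v) := by
    intro v w
    have heq := tupB_card_eq S hSsym φ (2 ^ j) (v, (0 : ZMod 2)) (w, (0 : ZMod 2))
    rw [hψ v, hψ w] at heq
    rw [← hident v w, heq, hident (ψ v) (ψ w)]
  -- main adjacency invariance
  have hiff : ∀ v w : G, (w - v ∈ S ↔ ψ w - ψ v ∈ S) := by
    intro v w
    have h1 := hparity (w - v)
    have h2 := hparity (ψ w - ψ v)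
    have h3 := htrans v w
    rw [h3] at h1
    have hmod : tupCount S 1 (w - v) ≡ tupCount S 1 (ψ w - ψ v) [MOD 2] := h1.symm.trans h2
    constructor
    · intro hm
      by_contra hm2
      rw [tupCount_one_mem hm, tupCount_one_not_mem hm2] at hmod
      exact absurd hmod (by decide)
    · intro hm
      by_contra hm2
      rw [tupCount_one_not_mem hm2, tupCount_one_mem hm] at hmod
      exact absurd hmod (by decide)
  -- ψ is bijective
  have hinj : Function.Injective ψ := by
    intro a b hab
    have h1 : φ (a, (0 : ZMod 2)) = φ (b, (0 : ZMod 2)) := by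
      rw [hψ a, hψ b, hab]
    have h2 := φ.toEquiv.injective h1
    exact (Prod.ext_iff.mp h2).1
  have hbij : Function.Bijective ψ := Finite.injective_iff_bijective.mp hinj
  refine ⟨⟨Equiv.ofBijective ψ hbij, @fun a b => ?_⟩, fun v => hψ v⟩
  show (cayleyGraph S).Adj (ψ a) (ψ b) ↔ (cayleyGraph S).Adj a b
  constructor
  · rintro ⟨hne, h1, h2⟩
    exact ⟨fun h => hne (by rw [h]), (hiff b a).mpr h1, (hiff a b).mpr h2⟩
  · rintro ⟨hne, h1, h2⟩
    exact ⟨fun h => hne (hinj h), (hiff b a).mp h1, (hiff a b).mp h2⟩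
end

section
/- Let X and Y be twin-free, connected, finite simple graphs, each with at least one edge, such that: (1) X is not bipartite; (2) Y is bipartite with bipartition V(Y) = Y₀ ∪ Y₁, where |Y₀| and |Y₁| are each relatively prime to |V(X)|, and either |Y₀| ≠ |Y₁| or Y has an automorphism interchanging Y₀ and Y₁; and (3) every automorphism of the canonical bipartite double cover BX lies in the image of the canonical embedding of Aut(X) × S₂ into Aut(BX). Then every automorphism of the direct product X × Y has the form (x,y) ↦ (α(x), β(y)) for some automorphism α of X and some automorphism β of Y; that is, Aut(X × Y) = Aut(X) × Aut(Y). -/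
section Skel
variable {V : Type*}

/-- Boolean square: adjacency iff distinct with a common neighbour. -/
def bsq (G : SimpleGraph V) : SimpleGraph V where
  Adj a b := a ≠ b ∧ (G.neighborSet a ∩ G.neighborSet b).Nonempty
  symm := ⟨by rintro a b ⟨h1, h2⟩; exact ⟨h1.symm, by rwa [Set.inter_comm]⟩⟩
  loopless := ⟨fun a h => h.1 rfl⟩

/-- Hammack's dispensability. -/
def Disp (G : SimpleGraph V) (a b : V) : Prop :=
  ∃ z, ((G.neighborSet a ∩ G.neighborSet b ⊂ G.neighborSet a ∩ G.neighborSet z) ∨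
        (G.neighborSet a ⊂ G.neighborSet z ∧ G.neighborSet z ⊂ G.neighborSet b)) ∧
       ((G.neighborSet a ∩ G.neighborSet b ⊂ G.neighborSet b ∩ G.neighborSet z) ∨
        (G.neighborSet b ⊂ G.neighborSet z ∧ G.neighborSet z ⊂ G.neighborSet a))

lemma Disp.symm' {G : SimpleGraph V} {a b : V} (h : Disp G a b) : Disp G b a := by
  obtain ⟨z, h1, h2⟩ := h
  refine ⟨z, ?_, ?_⟩
  · rwa [Set.inter_comm (G.neighborSet b) (G.neighborSet a)]
  · rwa [Set.inter_comm (G.neighborSet b) (G.neighborSet a)]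

/-- Cartesian skeleton. -/
def skel (G : SimpleGraph V) : SimpleGraph V where
  Adj a b := (bsq G).Adj a b ∧ ¬ Disp G a b
  symm := ⟨by rintro a b ⟨h1, h2⟩; exact ⟨h1.symm, fun h => h2 h.symm'⟩⟩
  loopless := ⟨fun a h => h.1.1 rfl⟩

variable [Fintype V] {G : SimpleGraph V}

private noncomputable def mea (G : SimpleGraph V) (a b : V) : ℕ :=
  (Fintype.card V - (G.neighborSet a ∩ G.neighborSet b).ncard) * (Fintype.card V + 1)
    + (G.neighborSet a ∪ G.neighborSet b).ncard

private lemma ncard_le_card (s : Set V) : s.ncard ≤ Fintype.card V := by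
  classical
  simpa [Set.ncard_univ, Nat.card_eq_fintype_card] using
    Set.ncard_le_ncard (Set.subset_univ s) (Set.toFinite _)

private lemma mea_lt_of_inter (a b c d : V)
    (h : G.neighborSet a ∩ G.neighborSet b ⊂ G.neighborSet c ∩ G.neighborSet d) :
    mea G c d < mea G a b := by
  have h1 : (G.neighborSet a ∩ G.neighborSet b).ncard
      < (G.neighborSet c ∩ G.neighborSet d).ncard := Set.ncard_lt_ncard h (Set.toFinite _)
  have h2 := ncard_le_card (G.neighborSet c ∩ G.neighborSet d)
  have h3 := ncard_le_card (G.neighborSet c ∪ G.neighborSet d)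
  have h4 := ncard_le_card (G.neighborSet a ∩ G.neighborSet b)
  unfold mea
  set n := Fintype.card V
  set p := (G.neighborSet a ∩ G.neighborSet b).ncard
  set q := (G.neighborSet c ∩ G.neighborSet d).ncard
  calc (n - q) * (n + 1) + (G.neighborSet c ∪ G.neighborSet d).ncard
      ≤ (n - q) * (n + 1) + n := by omega
    _ < (n - q + 1) * (n + 1) := by nlinarith
    _ ≤ (n - p) * (n + 1) := by
        have : n - q + 1 ≤ n - p := by omega
        exact Nat.mul_le_mul_right _ this
    _ ≤ (n - p) * (n + 1) + (G.neighborSet a ∪ G.neighborSet b).ncard := by omega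

private lemma mea_lt_of_union (a b c d : V)
    (hi : (G.neighborSet a ∩ G.neighborSet b).ncard
        = (G.neighborSet c ∩ G.neighborSet d).ncard)
    (h : G.neighborSet c ∪ G.neighborSet d ⊂ G.neighborSet a ∪ G.neighborSet b) :
    mea G c d < mea G a b := by
  have h1 : (G.neighborSet c ∪ G.neighborSet d).ncard
      < (G.neighborSet a ∪ G.neighborSet b).ncard := Set.ncard_lt_ncard h (Set.toFinite _)
  unfold mea
  rw [hi]
  omega

/-- Endpoints of a Boolean-square edge are connected in the skeleton. -/
lemma bsq_adj_skel_reach (hni : ∀ v, (G.neighborSet v).Nonempty) :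
    ∀ a b, (bsq G).Adj a b → Relation.ReflTransGen (skel G).Adj a b := by
  classical
  suffices H : ∀ k a b, mea G a b ≤ k → (bsq G).Adj a b →
      Relation.ReflTransGen (skel G).Adj a b by
    intro a b hab; exact H (mea G a b) a b le_rfl hab
  intro k
  induction k using Nat.strong_induction_on with
  | _ k ih =>
    intro a b hm hab
    by_cases hd : Disp G a b
    · obtain ⟨z, h1, h2⟩ := hd
      have hne_ab : (G.neighborSet a ∩ G.neighborSet b).Nonempty := hab.2
      have hza : z ≠ a := by
        rintro rfl
        rcases h2 with h2 | h2
        · rw [Set.inter_comm (G.neighborSet b) (G.neighborSet z)] at h2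
          exact h2.2 h2.1
        · exact h2.2.2 le_rfl
      have hzb : z ≠ b := by
        rintro rfl
        rcases h1 with h1 | h1
        · rw [Set.inter_comm (G.neighborSet a) (G.neighborSet z)] at h1
          exact h1.2 h1.1
        · exact h1.2.2 le_rfl
      have hbsq_az : (bsq G).Adj a z := by
        refine ⟨hza.symm, ?_⟩
        rcases h1 with h1 | h1
        · exact hne_ab.mono h1.1
        · obtain ⟨w, hw⟩ := hni a
          exact ⟨w, hw, h1.1.1 hw⟩
      have hbsq_zb : (bsq G).Adj z b := by
        refine ⟨hzb, ?_⟩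
        rcases h2 with h2 | h2
        · obtain ⟨w, hw1, hw2⟩ := hne_ab.mono h2.1
          exact ⟨w, hw2, hw1⟩
        · obtain ⟨w, hw⟩ := hni b
          exact ⟨w, h2.1.1 hw, hw⟩
      have hmaz : mea G a z < mea G a b := by
        rcases h1 with h1 | h1
        · exact mea_lt_of_inter a b a z h1
        · refine mea_lt_of_union a b a z ?_ ?_
          · rw [Set.inter_eq_left.mpr (h1.1.1.trans h1.2.1),
              Set.inter_eq_left.mpr h1.1.1]
          · rw [Set.union_eq_right.mpr h1.1.1,
              Set.union_eq_right.mpr (h1.1.1.trans h1.2.1)]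
            exact h1.2
      have hmzb : mea G z b < mea G a b := by
        rcases h2 with h2 | h2
        · refine mea_lt_of_inter a b z b ?_
          rwa [Set.inter_comm (G.neighborSet z)]
        · rcases h1 with h1 | h1
          · refine mea_lt_of_union a b z b ?_ ?_
            · rw [Set.inter_eq_right.mpr (h2.1.1.trans h2.2.1),
                Set.inter_eq_right.mpr h2.1.1]
            · rw [Set.union_eq_left.mpr h2.1.1,
                Set.union_eq_left.mpr (h2.1.1.trans h2.2.1)]
              exact h2.2
          · exact absurd (h1.2.trans h2.1) (ssubset_irrefl _)
      exact (ih _ (lt_of_lt_of_le hmaz hm) a z le_rfl hbsq_az).trans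
        (ih _ (lt_of_lt_of_le hmzb hm) z b le_rfl hbsq_zb)
    · exact Relation.ReflTransGen.single ⟨hab, hd⟩

end Skel


section Equiv0
variable {A : Type*} {B : Type*} {GA : SimpleGraph A} {GB : SimpleGraph B}

lemma iso_image_nbhd (φ : GA ≃g GB) (a : A) :
    (fun v => φ v) '' (GA.neighborSet a) = GB.neighborSet (φ a) := by
  ext w
  constructor
  · rintro ⟨u, hu, rfl⟩
    exact (φ.map_adj_iff.mpr hu : GB.Adj (φ a) (φ u))
  · intro hw
    refine ⟨φ.symm w, ?_, by simp⟩
    have : GB.Adj (φ a) (φ (φ.symm w)) := by simpa using hw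
    exact φ.map_adj_iff.mp this

lemma iso_bsq_adj (φ : GA ≃g GB) {a b : A} (h : (bsq GA).Adj a b) :
    (bsq GB).Adj (φ a) (φ b) := by
  obtain ⟨hne, w, hw1, hw2⟩ := h
  exact ⟨fun he => hne (φ.injective he), φ w,
    (iso_image_nbhd φ a) ▸ ⟨w, hw1, rfl⟩, (iso_image_nbhd φ b) ▸ ⟨w, hw2, rfl⟩⟩

private lemma img_inter (φ : GA ≃g GB) (s t : Set A) :
    (fun v => φ v) '' (s ∩ t) = ((fun v => φ v) '' s) ∩ ((fun v => φ v) '' t) :=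
  Set.image_inter (φ.injective)

private lemma img_ssubset (φ : GA ≃g GB) {s t : Set A} (h : s ⊂ t) :
    (fun v => φ v) '' s ⊂ (fun v => φ v) '' t := by
  rw [Set.ssubset_iff_of_subset (Set.image_mono h.subset)] at *
  obtain ⟨x, hx, hnx⟩ := Set.exists_of_ssubset h
  exact ⟨φ x, ⟨x, hx, rfl⟩, fun ⟨y, hy, hyx⟩ => hnx (φ.injective hyx ▸ hy)⟩

lemma iso_disp (φ : GA ≃g GB) {a b : A} (h : Disp GA a b) : Disp GB (φ a) (φ b) := by
  obtain ⟨z, h1, h2⟩ := h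
  refine ⟨φ z, ?_, ?_⟩
  · rcases h1 with h1 | h1
    · left
      have := img_ssubset φ h1
      rwa [img_inter, img_inter, iso_image_nbhd, iso_image_nbhd, iso_image_nbhd] at this
    · right
      constructor
      · have := img_ssubset φ h1.1; rwa [iso_image_nbhd, iso_image_nbhd] at this
      · have := img_ssubset φ h1.2; rwa [iso_image_nbhd, iso_image_nbhd] at this
  · rcases h2 with h2 | h2
    · left
      have := img_ssubset φ h2
      rwa [img_inter, img_inter, iso_image_nbhd, iso_image_nbhd, iso_image_nbhd] at this
    · right
      constructor
      · have := img_ssubset φ h2.1; rwa [iso_image_nbhd, iso_image_nbhd] at this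
      · have := img_ssubset φ h2.2; rwa [iso_image_nbhd, iso_image_nbhd] at this

lemma iso_skel_adj (φ : GA ≃g GB) {a b : A} : (skel GA).Adj a b ↔ (skel GB).Adj (φ a) (φ b) := by
  constructor
  · rintro ⟨h1, h2⟩
    refine ⟨iso_bsq_adj φ h1, fun hd => h2 ?_⟩
    have := iso_disp φ.symm hd
    simpa using this
  · rintro ⟨h1, h2⟩
    have h1' := iso_bsq_adj φ.symm h1
    simp only [RelIso.symm_apply_apply] at h1'
    exact ⟨h1', fun hd => h2 (iso_disp φ hd)⟩

end Equiv0

section Walks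
variable {V : Type*} {G : SimpleGraph V}

lemma evenwalk_bsq_reach :
    ∀ (n : ℕ) (x x' : V) (p : G.Walk x x'), p.length = n → Even n →
      Relation.ReflTransGen (bsq G).Adj x x' := by
  intro n
  induction n using Nat.strong_induction_on with
  | _ n ih =>
    intro x x' p hl he
    cases p with
    | nil => exact Relation.ReflTransGen.refl
    | @cons _ a _ h q =>
      cases q with
      | nil =>
        rw [Nat.even_iff] at he
        simp [SimpleGraph.Walk.length_cons] at hl
        omega
      | @cons _ b _ h' q' =>
        simp only [SimpleGraph.Walk.length_cons] at hl
        have hq : q'.length < n := by omega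
        have he' : Even q'.length := by
          rw [Nat.even_iff] at he ⊢; omega
        have tail := ih q'.length hq b x' q' rfl he'
        by_cases hxb : x = b
        · subst hxb; exact tail
        · exact Relation.ReflTransGen.head ⟨hxb, a, h, h'.symm⟩ tail

/-- In a connected non-bipartite graph any two vertices are joined by an even walk. -/
lemma even_walk_of_nonbip [Nonempty V] (hconn : G.Connected) (hnb : ¬ G.Colorable 2) :
    ∀ x x' : V, ∃ p : G.Walk x x', Even p.length := by
  by_cases hodd : ∃ v : V, ∃ p : G.Walk v v, Odd p.length
  · obtain ⟨v, p, hp⟩ := hodd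
    intro x x'
    obtain ⟨q1⟩ := hconn.preconnected x v
    obtain ⟨q2⟩ := hconn.preconnected v x'
    by_cases h : Even (q1.length + q2.length)
    · exact ⟨q1.append q2, by simpa using h⟩
    · refine ⟨q1.append (p.append q2), ?_⟩
      simp only [SimpleGraph.Walk.length_append]
      rw [Nat.even_iff] at h ⊢
      rw [Nat.odd_iff] at hp
      omega
  · exfalso
    push_neg at hodd
    simp only [Nat.not_odd_iff_even] at hodd
    obtain ⟨r⟩ := ‹Nonempty V›
    have key : ∀ (v : V) (p q : G.Walk r v), Even p.length ↔ Even q.length := by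
      intro v p q
      have := hodd r (p.append q.reverse)
      rw [SimpleGraph.Walk.length_append, SimpleGraph.Walk.length_reverse] at this
      rw [Nat.even_iff] at this ⊢
      rw [Nat.even_iff]
      omega
    classical
    refine hnb ⟨SimpleGraph.Coloring.mk
      (fun v => if Even ((hconn.preconnected r v).some.length) then (0 : Fin 2) else 1) ?_⟩
    intro u w hadj
    have hparity : Even ((hconn.preconnected r w).some.length)
        ↔ ¬ Even ((hconn.preconnected r u).some.length) := by
      have := key w ((hconn.preconnected r u).some.append (SimpleGraph.Walk.cons hadj SimpleGraph.Walk.nil)) (hconn.preconnected r w).some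
      rw [SimpleGraph.Walk.length_append] at this
      simp only [SimpleGraph.Walk.length_cons, SimpleGraph.Walk.length_nil] at this
      simp only [Nat.even_iff] at this ⊢
      omega
    by_cases h : Even ((hconn.preconnected r u).some.length)
    · have h' : ¬ Even ((hconn.preconnected r w).some.length) := fun he => (hparity.mp he) h
      simp [h, h']
    · have h' : Even ((hconn.preconnected r w).some.length) := hparity.mpr h
      simp [h, h']

end Walks
section ProdSkel
variable {V W : Type*} {X : SimpleGraph V} {Y : SimpleGraph W}

lemma nbhd_prod (x : V) (y : W) :
    (directProd X Y).neighborSet (x, y) = (X.neighborSet x) ×ˢ (Y.neighborSet y) := by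
  ext ⟨v, w⟩
  simp [directProd, SimpleGraph.neighborSet, Set.mem_prod]

private lemma prod_ssubset_of_left {A B : Type*} {s s' : Set A} {t t' : Set B}
    (h : s ⊂ s') (ht : t.Nonempty) (htt : t ⊆ t') : s ×ˢ t ⊂ s' ×ˢ t' := by
  refine ⟨Set.prod_mono h.subset htt, fun hsub => ?_⟩
  obtain ⟨a, ha, hna⟩ := Set.exists_of_ssubset h
  obtain ⟨b, hb⟩ := ht
  exact hna (hsub (⟨ha, htt hb⟩ : (a, b) ∈ s' ×ˢ t')).1

private lemma prod_ssubset_of_right {A B : Type*} {s s' : Set A} {t t' : Set B}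
    (h : t ⊂ t') (hs : s.Nonempty) (hss : s ⊆ s') : s ×ˢ t ⊂ s' ×ˢ t' := by
  refine ⟨Set.prod_mono hss h.subset, fun hsub => ?_⟩
  obtain ⟨b, hb, hnb⟩ := Set.exists_of_ssubset h
  obtain ⟨a, ha⟩ := hs
  exact hnb (hsub (⟨hss ha, hb⟩ : (a, b) ∈ s' ×ˢ t')).2

private lemma inter_ssub_left {A : Type*} {s t : Set A} (h : ¬ s ⊆ t) : s ∩ t ⊂ s :=
  (Set.inter_subset_left).ssubset_of_ne (fun he => h (Set.inter_eq_left.mp he))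

private lemma inter_ssub_right {A : Type*} {s t : Set A} (h : ¬ t ⊆ s) : s ∩ t ⊂ t :=
  (Set.inter_subset_right).ssubset_of_ne (fun he => h (Set.inter_eq_right.mp he))

variable (hniX : ∀ v, (X.neighborSet v).Nonempty) (hniY : ∀ w, (Y.neighborSet w).Nonempty)

/-- diagonal, witness (x,y') : works when ¬ Nx ⊆ Nx' and ¬ Ny' ⊆ Ny -/
private lemma dispA1 {x x' : V} {y y' : W}
    (hAB : (X.neighborSet x ∩ X.neighborSet x').Nonempty)
    (hBB : (Y.neighborSet y ∩ Y.neighborSet y').Nonempty)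
    (hA : ¬ X.neighborSet x ⊆ X.neighborSet x')
    (hB : ¬ Y.neighborSet y' ⊆ Y.neighborSet y) :
    Disp (directProd X Y) (x, y) (x', y') := by
  refine ⟨(x, y'), Or.inl ?_, Or.inl ?_⟩
  · rw [nbhd_prod, nbhd_prod, nbhd_prod, Set.prod_inter_prod, Set.prod_inter_prod,
      Set.inter_self]
    exact prod_ssubset_of_left (inter_ssub_left hA) hBB Set.Subset.rfl
  · rw [nbhd_prod, nbhd_prod, nbhd_prod, Set.prod_inter_prod, Set.prod_inter_prod,
      Set.inter_self]
    rw [Set.inter_comm (X.neighborSet x') (X.neighborSet x)]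
    exact prod_ssubset_of_right (inter_ssub_right hB) hAB Set.Subset.rfl
/-- diagonal, witness (x',y) : works when ¬ Nx' ⊆ Nx and ¬ Ny ⊆ Ny' -/
private lemma dispA2 {x x' : V} {y y' : W}
    (hAB : (X.neighborSet x ∩ X.neighborSet x').Nonempty)
    (hBB : (Y.neighborSet y ∩ Y.neighborSet y').Nonempty)
    (hA : ¬ X.neighborSet x' ⊆ X.neighborSet x)
    (hB : ¬ Y.neighborSet y ⊆ Y.neighborSet y') :
    Disp (directProd X Y) (x, y) (x', y') := by
  refine ⟨(x', y), Or.inl ?_, Or.inl ?_⟩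
  · rw [nbhd_prod, nbhd_prod, nbhd_prod, Set.prod_inter_prod, Set.prod_inter_prod,
      Set.inter_self]
    exact prod_ssubset_of_right (inter_ssub_left hB) hAB Set.Subset.rfl
  · rw [nbhd_prod, nbhd_prod, nbhd_prod, Set.prod_inter_prod, Set.prod_inter_prod,
      Set.inter_self, Set.inter_comm (Y.neighborSet y') (Y.neighborSet y)]
    exact prod_ssubset_of_left (inter_ssub_right hA) hBB Set.Subset.rfl

/-- diagonal, witness (x',y) : works when Nx' ⊂ Nx and Ny' ⊂ Ny -/
private lemma dispA3 (hniX : ∀ v, (X.neighborSet v).Nonempty)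
    (hniY : ∀ w, (Y.neighborSet w).Nonempty) {x x' : V} {y y' : W}
    (hAB : (X.neighborSet x ∩ X.neighborSet x').Nonempty)
    (hA : X.neighborSet x' ⊂ X.neighborSet x)
    (hB : Y.neighborSet y' ⊂ Y.neighborSet y) :
    Disp (directProd X Y) (x, y) (x', y') := by
  refine ⟨(x', y), Or.inl ?_, Or.inr ⟨?_, ?_⟩⟩
  · rw [nbhd_prod, nbhd_prod, nbhd_prod, Set.prod_inter_prod, Set.prod_inter_prod,
      Set.inter_self]
    refine prod_ssubset_of_right (inter_ssub_left ?_) hAB Set.Subset.rfl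
    exact fun h => (lt_irrefl _ (hB.trans_le h))
  · rw [nbhd_prod, nbhd_prod]
    exact prod_ssubset_of_right hB (hniX x') Set.Subset.rfl
  · rw [nbhd_prod, nbhd_prod]
    exact prod_ssubset_of_left hA (hniY y) Set.Subset.rfl

/-- all diagonal Boolean-square edges are dispensable -/
lemma disp_diag (hniX : ∀ v, (X.neighborSet v).Nonempty)
    (hniY : ∀ w, (Y.neighborSet w).Nonempty)
    (thinX : ∀ v w : V, X.neighborSet v = X.neighborSet w → v = w)
    (thinY : ∀ v w : W, Y.neighborSet v = Y.neighborSet w → v = w)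
    {x x' : V} {y y' : W} (hx : x ≠ x') (hy : y ≠ y')
    (hAB : (X.neighborSet x ∩ X.neighborSet x').Nonempty)
    (hBB : (Y.neighborSet y ∩ Y.neighborSet y').Nonempty) :
    Disp (directProd X Y) (x, y) (x', y') := by
  have hAne : X.neighborSet x ≠ X.neighborSet x' := fun h => hx (thinX _ _ h)
  have hBne : Y.neighborSet y ≠ Y.neighborSet y' := fun h => hy (thinY _ _ h)
  by_cases hxx' : X.neighborSet x ⊆ X.neighborSet x'
  · by_cases hyy' : Y.neighborSet y ⊆ Y.neighborSet y'
    · have := dispA3 hniX hniY (x := x') (x' := x) (y := y') (y' := y)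
        (by rwa [Set.inter_comm]) ⟨hxx', fun h => hAne (Set.Subset.antisymm hxx' h)⟩
        ⟨hyy', fun h => hBne (Set.Subset.antisymm hyy' h)⟩
      exact this.symm'
    · exact dispA2 hAB hBB (fun h => hAne (Set.Subset.antisymm hxx' h)) hyy'
  · by_cases hx'x : X.neighborSet x' ⊆ X.neighborSet x
    · by_cases hy'y : Y.neighborSet y' ⊆ Y.neighborSet y
      · exact dispA3 hniX hniY hAB ⟨hx'x, fun h => hAne (Set.Subset.antisymm h hx'x)⟩
          ⟨hy'y, fun h => hBne (Set.Subset.antisymm h hy'y)⟩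
      · exact dispA1 hAB hBB hxx' hy'y
    · by_cases hy'y : Y.neighborSet y' ⊆ Y.neighborSet y
      · exact dispA2 hAB hBB hx'x (fun h => hBne (Set.Subset.antisymm h hy'y))
      · exact dispA1 hAB hBB hxx' hy'y

private lemma prod_ssub_extract {A B : Type*} {s s' : Set A} {t t' : Set B}
    (hs : s.Nonempty) (ht : t.Nonempty) (h : s ×ˢ t ⊂ s' ×ˢ t') :
    s ⊆ s' ∧ t ⊆ t' ∧ ¬ (s' ⊆ s ∧ t' ⊆ t) := by
  rw [Set.ssubset_def] at h
  obtain ⟨hsub, hnsub⟩ := h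
  rw [Set.prod_subset_prod_iff] at hsub
  rcases hsub with ⟨h1, h2⟩ | h1 | h1
  · exact ⟨h1, h2, fun ⟨a, b⟩ => hnsub (Set.prod_mono a b)⟩
  · exact absurd h1 hs.ne_empty
  · exact absurd h1 ht.ne_empty

/-- dispensability transfers along X-fibres -/
lemma disp_lift_X (hniY : ∀ w, (Y.neighborSet w).Nonempty) {x x' : V} (y : W)
    (h : Disp X x x') : Disp (directProd X Y) (x, y) (x', y) := by
  obtain ⟨u, h1, h2⟩ := h
  refine ⟨(u, y), ?_, ?_⟩
  · rcases h1 with h1 | h1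
    · left
      rw [nbhd_prod, nbhd_prod, nbhd_prod, Set.prod_inter_prod, Set.prod_inter_prod,
        Set.inter_self]
      exact prod_ssubset_of_left h1 (hniY y) Set.Subset.rfl
    · right
      rw [nbhd_prod, nbhd_prod, nbhd_prod]
      exact ⟨prod_ssubset_of_left h1.1 (hniY y) Set.Subset.rfl,
        prod_ssubset_of_left h1.2 (hniY y) Set.Subset.rfl⟩
  · rcases h2 with h2 | h2
    · left
      rw [nbhd_prod, nbhd_prod, nbhd_prod, Set.prod_inter_prod, Set.prod_inter_prod,
        Set.inter_self]
      exact prod_ssubset_of_left h2 (hniY y) Set.Subset.rfl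
    · right
      rw [nbhd_prod, nbhd_prod, nbhd_prod]
      exact ⟨prod_ssubset_of_left h2.1 (hniY y) Set.Subset.rfl,
        prod_ssubset_of_left h2.2 (hniY y) Set.Subset.rfl⟩

/-- dispensability projects along X-fibres -/
lemma disp_proj_X (hniX : ∀ v, (X.neighborSet v).Nonempty)
    (hniY : ∀ w, (Y.neighborSet w).Nonempty) {x x' : V} {y : W}
    (hAB : (X.neighborSet x ∩ X.neighborSet x').Nonempty)
    (h : Disp (directProd X Y) (x, y) (x', y)) : Disp X x x' := by
  obtain ⟨⟨u, v⟩, h1, h2⟩ := h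
  simp only [nbhd_prod, Set.prod_inter_prod, Set.inter_self] at h1 h2
  refine ⟨u, ?_, ?_⟩
  · rcases h1 with h1 | h1
    · left
      obtain ⟨hs1, hs2, hne⟩ := prod_ssub_extract hAB (hniY y) h1
      exact Set.ssubset_def.mpr ⟨hs1, fun hrev => hne ⟨hrev, Set.inter_subset_left⟩⟩
    · right
      obtain ⟨hs1, hs2, hne1⟩ := prod_ssub_extract (hniX x) (hniY y) h1.1
      obtain ⟨hs3, hs4, hne2⟩ := prod_ssub_extract (hniX u) (hniY v) h1.2
      exact ⟨Set.ssubset_def.mpr ⟨hs1, fun hrev => hne1 ⟨hrev, hs4⟩⟩,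
        Set.ssubset_def.mpr ⟨hs3, fun hrev => hne2 ⟨hrev, hs2⟩⟩⟩
  · rcases h2 with h2 | h2
    · left
      obtain ⟨hs1, hs2, hne⟩ := prod_ssub_extract hAB (hniY y) h2
      exact Set.ssubset_def.mpr ⟨hs1, fun hrev => hne ⟨hrev, Set.inter_subset_left⟩⟩
    · right
      obtain ⟨hs1, hs2, hne1⟩ := prod_ssub_extract (hniX x') (hniY y) h2.1
      obtain ⟨hs3, hs4, hne2⟩ := prod_ssub_extract (hniX u) (hniY v) h2.2
      exact ⟨Set.ssubset_def.mpr ⟨hs1, fun hrev => hne1 ⟨hrev, hs4⟩⟩,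
        Set.ssubset_def.mpr ⟨hs3, fun hrev => hne2 ⟨hrev, hs2⟩⟩⟩
def swapIso (X : SimpleGraph V) (Y : SimpleGraph W) :
    directProd X Y ≃g directProd Y X where
  toEquiv := Equiv.prodComm V W
  map_rel_iff' := by
    intro a b
    show (directProd Y X).Adj (a.2, a.1) (b.2, b.1) ↔ _
    constructor
    · rintro ⟨h1, h2⟩; exact ⟨h2, h1⟩
    · rintro ⟨h1, h2⟩; exact ⟨h2, h1⟩

lemma disp_lift_Y (hniX : ∀ v, (X.neighborSet v).Nonempty) (x : V) {y y' : W}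
    (h : Disp Y y y') : Disp (directProd X Y) (x, y) (x, y') := by
  have h1 : Disp (directProd Y X) (y, x) (y', x) := disp_lift_X hniX x h
  have h2 := iso_disp (swapIso Y X) h1
  simpa [swapIso] using h2

lemma disp_proj_Y (hniX : ∀ v, (X.neighborSet v).Nonempty)
    (hniY : ∀ w, (Y.neighborSet w).Nonempty) {x : V} {y y' : W}
    (hBB : (Y.neighborSet y ∩ Y.neighborSet y').Nonempty)
    (h : Disp (directProd X Y) (x, y) (x, y')) : Disp Y y y' := by
  have h1 := iso_disp (swapIso X Y) h
  simp only [swapIso] at h1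
  exact disp_proj_X hniY hniX hBB h1

lemma bsq_prod_adj {x x' : V} {y y' : W} :
    (bsq (directProd X Y)).Adj (x, y) (x', y') ↔ ((x, y) ≠ (x', y')) ∧
      (X.neighborSet x ∩ X.neighborSet x').Nonempty ∧
      (Y.neighborSet y ∩ Y.neighborSet y').Nonempty := by
  show _ ≠ _ ∧ _ ↔ _
  rw [nbhd_prod, nbhd_prod, Set.prod_inter_prod, Set.prod_nonempty_iff]

/-- The skeleton of a direct product is the box product of the skeletons. -/
lemma skel_prod_adj (hniX : ∀ v, (X.neighborSet v).Nonempty)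
    (hniY : ∀ w, (Y.neighborSet w).Nonempty)
    (thinX : ∀ v w : V, X.neighborSet v = X.neighborSet w → v = w)
    (thinY : ∀ v w : W, Y.neighborSet v = Y.neighborSet w → v = w)
    (x x' : V) (y y' : W) :
    (skel (directProd X Y)).Adj (x, y) (x', y') ↔
      (x = x' ∧ (skel Y).Adj y y') ∨ (y = y' ∧ (skel X).Adj x x') := by
  constructor
  · rintro ⟨hbs, hnd⟩
    rw [bsq_prod_adj] at hbs
    obtain ⟨hne, hAB, hBB⟩ := hbs
    by_cases hx : x = x'
    · subst hx
      have hy : y ≠ y' := fun h => hne (by rw [h])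
      exact Or.inl ⟨rfl, ⟨⟨hy, hBB⟩, fun hd => hnd (disp_lift_Y hniX x hd)⟩⟩
    · by_cases hy : y = y'
      · subst hy
        exact Or.inr ⟨rfl, ⟨⟨hx, hAB⟩, fun hd => hnd (disp_lift_X hniY y hd)⟩⟩
      · exact absurd (disp_diag hniX hniY thinX thinY hx hy hAB hBB) hnd
  · rintro (⟨rfl, ⟨⟨hy, hBB⟩, hnd⟩⟩ | ⟨rfl, ⟨⟨hx, hAB⟩, hnd⟩⟩)
    · refine ⟨bsq_prod_adj.mpr ⟨fun h => hy (congrArg Prod.snd h), hniX x |>.mono ?_, hBB⟩,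
        fun hd => hnd (disp_proj_Y hniX hniY hBB hd)⟩
      rw [Set.inter_self]
    · refine ⟨bsq_prod_adj.mpr ⟨fun h => hx (congrArg Prod.fst h), hAB, hniY y |>.mono ?_⟩,
        fun hd => hnd (disp_proj_X hniX hniY hAB hd)⟩
      rw [Set.inter_self]

end ProdSkel
section MainProof
variable {V W : Type*} {X : SimpleGraph V} {Y : SimpleGraph W} {Y0 Y1 : Set W}

lemma rtg_compose {A : Type*} {R S : A → A → Prop} (h : ∀ a b, R a b → Relation.ReflTransGen S a b)
    {a b : A} (hr : Relation.ReflTransGen R a b) : Relation.ReflTransGen S a b := by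
  induction hr with
  | refl => exact Relation.ReflTransGen.refl
  | tail _ hbc ih => exact ih.trans (h _ _ hbc)

lemma conn_no_isolated {A : Type*} {G : SimpleGraph A} (h : G.Connected)
    (hv : ∃ a b : A, a ≠ b) : ∀ v, (G.neighborSet v).Nonempty := by
  intro v
  obtain ⟨a, b, hab⟩ := hv
  have hu : ∃ u, u ≠ v := by
    by_cases hva : v = a
    · exact ⟨b, fun hbv => hab (hva ▸ hbv.symm ▸ rfl)⟩
    · exact ⟨a, fun hav => hva (hav ▸ rfl)⟩
  obtain ⟨u, hu⟩ := hu
  obtain ⟨p⟩ := h.preconnected v u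
  cases p with
  | nil => exact absurd rfl hu.symm
  | cons hadj _ => exact ⟨_, hadj⟩

lemma skelX_reach [Fintype V] [Nonempty V] (hXconn : X.Connected) (hXnotbip : ¬ X.Colorable 2)
    (hniX : ∀ v, (X.neighborSet v).Nonempty) :
    ∀ x x' : V, Relation.ReflTransGen (skel X).Adj x x' := by
  intro x x'
  obtain ⟨p, hp⟩ := even_walk_of_nonbip hXconn hXnotbip x x'
  exact rtg_compose (bsq_adj_skel_reach hniX) (evenwalk_bsq_reach p.length x x' p rfl hp)

variable (hYdisj : Disjoint Y0 Y1)
  (hYbip : ∀ v w : W, Y.Adj v w → (v ∈ Y0 ∧ w ∈ Y1) ∨ (v ∈ Y1 ∧ w ∈ Y0))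

include hYdisj hYbip

lemma part_step01 {y y' : W} (h : Y.Adj y y') (hy : y ∈ Y0) : y' ∈ Y1 := by
  rcases hYbip y y' h with ⟨_, h2⟩ | ⟨h1, _⟩
  · exact h2
  · exact absurd hy (Set.disjoint_right.mp hYdisj h1)

lemma part_step10 {y y' : W} (h : Y.Adj y y') (hy : y ∈ Y1) : y' ∈ Y0 := by
  rcases hYbip y y' h with ⟨h1, _⟩ | ⟨_, h2⟩
  · exact absurd hy (Set.disjoint_left.mp hYdisj h1)
  · exact h2

lemma walk_parity : ∀ {y y' : W} (p : Y.Walk y y'),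
    (y ∈ Y0 → y' ∈ Y0 → Even p.length) ∧ (y ∈ Y0 → y' ∈ Y1 → ¬ Even p.length) ∧
    (y ∈ Y1 → y' ∈ Y0 → ¬ Even p.length) ∧ (y ∈ Y1 → y' ∈ Y1 → Even p.length) := by
  intro y y' p
  induction p with
  | nil =>
    refine ⟨fun _ _ => Even.zero, fun h1 h2 => ?_, fun h1 h2 => ?_, fun _ _ => Even.zero⟩
    · exact absurd h2 (Set.disjoint_left.mp hYdisj h1)
    · exact absurd h2 (Set.disjoint_right.mp hYdisj h1)
  | @cons u t v hadj q ih =>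
    simp only [SimpleGraph.Walk.length_cons]
    refine ⟨fun h1 h2 => ?_, fun h1 h2 => ?_, fun h1 h2 => ?_, fun h1 h2 => ?_⟩
    · have ht := part_step01 hYdisj hYbip hadj h1
      have := ih.2.2.1 ht h2
      rw [Nat.even_add_one]; exact this
    · have ht := part_step01 hYdisj hYbip hadj h1
      have := ih.2.2.2 ht h2
      rw [Nat.even_add_one]; exact fun h => h this
    · have ht := part_step10 hYdisj hYbip hadj h1
      have := ih.1 ht h2
      rw [Nat.even_add_one]; exact fun h => h this
    · have ht := part_step10 hYdisj hYbip hadj h1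
      have := ih.2.1 ht h2
      rw [Nat.even_add_one]; exact this

lemma bsq_part {y y' : W} (h : (bsq Y).Adj y y')
    (hc : y ∈ Y0 ∪ Y1) : (y ∈ Y0 ∧ y' ∈ Y0) ∨ (y ∈ Y1 ∧ y' ∈ Y1) := by
  obtain ⟨-, w, hw1, hw2⟩ := h
  rw [SimpleGraph.mem_neighborSet] at hw1 hw2
  rcases hc with hy | hy
  · left
    refine ⟨hy, ?_⟩
    have hw : w ∈ Y1 := part_step01 hYdisj hYbip hw1 hy
    rcases hYbip y' w hw2 with ⟨h1, _⟩ | ⟨_, h2⟩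
    · exact h1
    · exact absurd hw (Set.disjoint_left.mp hYdisj h2)
  · right
    refine ⟨hy, ?_⟩
    have hw : w ∈ Y0 := part_step10 hYdisj hYbip hw1 hy
    rcases hYbip y' w hw2 with ⟨_, h1⟩ | ⟨h2, _⟩
    · exact absurd hw (Set.disjoint_right.mp hYdisj h1)
    · exact h2

lemma part_skel_reach [Fintype W] (hYconn : Y.Connected)
    (hniY : ∀ w, (Y.neighborSet w).Nonempty) {y y' : W}
    (h : (y ∈ Y0 ∧ y' ∈ Y0) ∨ (y ∈ Y1 ∧ y' ∈ Y1)) :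
    Relation.ReflTransGen (skel Y).Adj y y' := by
  obtain ⟨p⟩ := hYconn.preconnected y y'
  have hev : Even p.length := by
    rcases h with ⟨h1, h2⟩ | ⟨h1, h2⟩
    · exact (walk_parity hYdisj hYbip p).1 h1 h2
    · exact (walk_parity hYdisj hYbip p).2.2.2 h1 h2
  exact rtg_compose (bsq_adj_skel_reach hniY) (evenwalk_bsq_reach p.length y y' p rfl hev)

end MainProof
section Box
variable {V W : Type*} {G : SimpleGraph V} {H : SimpleGraph W} {K : SimpleGraph (V × W)}

/-- opposite sides of a 4-cycle -/
def Rho (K : SimpleGraph (V × W)) (a b c d : V × W) : Prop :=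
  K.Adj a b ∧ K.Adj c d ∧ K.Adj b c ∧ K.Adj d a ∧ a ≠ c ∧ b ≠ d

variable (hK : ∀ a b : V × W, K.Adj a b ↔
    ((a.1 = b.1 ∧ H.Adj a.2 b.2) ∨ (a.2 = b.2 ∧ G.Adj a.1 b.1)))

include hK

lemma rho_dirG {a b c d : V × W} (hr : Rho K a b c d) (h : a.2 = b.2 ∧ G.Adj a.1 b.1) :
    c.2 = d.2 ∧ G.Adj c.1 d.1 := by
  obtain ⟨hab, hcd, hbc, hda, hac, hbd⟩ := hr
  rcases (hK c d).mp hcd with hcdH | hcdG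
  · exfalso
    rcases (hK b c).mp hbc with hbcH | hbcG <;> rcases (hK d a).mp hda with hdaH | hdaG
    · have : b.1 = a.1 := by rw [hbcH.1, hcdH.1, hdaH.1]
      exact h.2.ne this.symm
    · have h1 : b.1 = d.1 := by rw [hbcH.1, hcdH.1]
      have h2 : b.2 = d.2 := by rw [← h.1, ← hdaG.1]
      exact hbd (Prod.ext_iff.mpr ⟨h1, h2⟩)
    · have h1 : a.1 = c.1 := by rw [← hdaH.1, ← hcdH.1]
      have h2 : a.2 = c.2 := by rw [h.1, hbcG.1]
      exact hac (Prod.ext_iff.mpr ⟨h1, h2⟩)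
    · have : c.2 = d.2 := by rw [← hbcG.1, ← h.1, ← hdaG.1]
      exact hcdH.2.ne this
  · exact hcdG

lemma rho_dirH {a b c d : V × W} (hr : Rho K a b c d) (h : a.1 = b.1 ∧ H.Adj a.2 b.2) :
    c.1 = d.1 ∧ H.Adj c.2 d.2 := by
  obtain ⟨hab, hcd, hbc, hda, hac, hbd⟩ := hr
  rcases (hK c d).mp hcd with hcdH | hcdG
  · exact hcdH
  · exfalso
    rcases (hK b c).mp hbc with hbcH | hbcG <;> rcases (hK d a).mp hda with hdaH | hdaG
    · have : c.1 = d.1 := by rw [← hbcH.1, ← h.1, hdaH.1]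
      exact hcdG.2.ne this
    · have h1 : a.1 = c.1 := by rw [h.1, hbcH.1]
      have h2 : a.2 = c.2 := by rw [← hdaG.1, ← hcdG.1]
      exact hac (Prod.ext_iff.mpr ⟨h1, h2⟩)
    · have h1 : b.1 = d.1 := by rw [← h.1, ← hdaH.1]
      have h2 : b.2 = d.2 := by rw [hbcG.1, hcdG.1]
      exact hbd (Prod.ext_iff.mpr ⟨h1, h2⟩)
    · have : a.2 = b.2 := by rw [hbcG.1, hcdG.1, hdaG.1]
      exact h.2.ne this
  
lemma rho_parG {x1 x2 : V} {y y'' : W} (hG : G.Adj x1 x2) (hH : H.Adj y y'') :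
    Rho K (x1, y) (x2, y) (x2, y'') (x1, y'') := by
  refine ⟨(hK _ _).mpr (Or.inr ⟨rfl, hG⟩), (hK _ _).mpr (Or.inr ⟨rfl, hG.symm⟩),
    (hK _ _).mpr (Or.inl ⟨rfl, hH⟩), (hK _ _).mpr (Or.inl ⟨rfl, hH.symm⟩), ?_, ?_⟩
  · exact fun he => hH.ne (congrArg Prod.snd he)
  · exact fun he => hH.ne (congrArg Prod.snd he)

lemma rho_parH {x x'' : V} {y1 y2 : W} (hH : H.Adj y1 y2) (hG : G.Adj x x'') :
    Rho K (x, y1) (x, y2) (x'', y2) (x'', y1) := by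
  refine ⟨(hK _ _).mpr (Or.inl ⟨rfl, hH⟩), (hK _ _).mpr (Or.inl ⟨rfl, hH.symm⟩),
    (hK _ _).mpr (Or.inr ⟨rfl, hG⟩), (hK _ _).mpr (Or.inr ⟨rfl, hG.symm⟩), ?_, ?_⟩
  · exact fun he => hG.ne (congrArg Prod.fst he)
  · exact fun he => hG.ne (congrArg Prod.fst he)

end Box

private lemma ncard_prod' {A B : Type*} (s : Set A) (t : Set B) :
    (s ×ˢ t).ncard = s.ncard * t.ncard :=
  Nat.card_coe_set_eq _ ▸ (Nat.card_congr (Equiv.Set.prod s t) |>.trans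
    (by rw [Nat.card_prod]; rw [Nat.card_coe_set_eq, Nat.card_coe_set_eq]))

private lemma univ_prod_singleton_ncard {A B : Type*} [Fintype A] (y : B) :
    ((Set.univ : Set A) ×ˢ ({y} : Set B)).ncard = Fintype.card A := by
  rw [ncard_prod', Set.ncard_univ, Set.ncard_singleton, Nat.card_eq_fintype_card, mul_one]

section Machinery
variable {V W : Type*} {G : SimpleGraph V} {H : SimpleGraph W} {K : SimpleGraph (V × W)}
  {P : Set W}

/-- the G-direction relation in a box-like product -/
def DGrel (G : SimpleGraph V) (W : Type*) : (V × W) → (V × W) → Prop :=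
  fun a b => a.2 = b.2 ∧ G.Adj a.1 b.1

/-- preimage of the G-direction relation under an automorphism -/
def Rrel (G : SimpleGraph V) (ψ : K ≃g K) : (V × W) → (V × W) → Prop :=
  fun a b => DGrel G W (ψ.symm a) (ψ.symm b)

/-- relation on the first factor -/
def FArel (G : SimpleGraph V) (ψ : K ≃g K) (P : Set W) : V → V → Prop :=
  fun x1 x2 => ∃ y ∈ P, Rrel G ψ (x1, y) (x2, y)

/-- relation on the second factor -/
def FBrel (G : SimpleGraph V) (ψ : K ≃g K) : W → W → Prop :=
  fun y1 y2 => ∃ x, Rrel G ψ (x, y1) (x, y2)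

lemma R'_symm (ψ : K ≃g K) {a b : V × W} (h : Rrel G ψ a b) : Rrel G ψ b a :=
  ⟨h.1.symm, h.2.symm⟩

lemma R'_of_DG (ψ : K ≃g K) {u v : V × W} (h : DGrel G W u v) : Rrel G ψ (ψ u) (ψ v) := by
  unfold Rrel
  rwa [RelIso.symm_apply_apply, RelIso.symm_apply_apply]

lemma DG_of_R' (ψ : K ≃g K) {u v : V × W} (h : Rrel G ψ u v) :
    DGrel G W (ψ.symm u) (ψ.symm v) := h

variable (hK : ∀ a b : V × W, K.Adj a b ↔
    ((a.1 = b.1 ∧ H.Adj a.2 b.2) ∨ (a.2 = b.2 ∧ G.Adj a.1 b.1)))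

include hK

lemma R'_adj (ψ : K ≃g K) {a b : V × W} (h : Rrel G ψ a b) : K.Adj a b := by
  have h1 : K.Adj (ψ.symm a) (ψ.symm b) := (hK _ _).mpr (Or.inr h)
  exact (ψ.symm.map_adj_iff).mp h1

lemma R'_rho (ψ : K ≃g K) {a b c d : V × W} (hr : Rho K a b c d) (h : Rrel G ψ a b) :
    Rrel G ψ c d := by
  obtain ⟨h1, h2, h3, h4, h5, h6⟩ := hr
  have hr' : Rho K (ψ.symm a) (ψ.symm b) (ψ.symm c) (ψ.symm d) :=
    ⟨(ψ.symm.map_adj_iff).mpr h1, (ψ.symm.map_adj_iff).mpr h2, (ψ.symm.map_adj_iff).mpr h3,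
     (ψ.symm.map_adj_iff).mpr h4, fun he => h5 (ψ.symm.injective he),
     fun he => h6 (ψ.symm.injective he)⟩
  exact rho_dirG hK hr' h

lemma R'_G (ψ : K ≃g K) {x1 x2 : V} {y : W} (h : Rrel G ψ (x1, y) (x2, y)) : G.Adj x1 x2 := by
  rcases (hK _ _).mp (R'_adj hK ψ h) with hh | hg
  · exact absurd hh.2 (H.loopless.irrefl y)
  · exact hg.2

lemma R'_H (ψ : K ≃g K) {x : V} {y1 y2 : W} (h : Rrel G ψ (x, y1) (x, y2)) : H.Adj y1 y2 := by
  rcases (hK _ _).mp (R'_adj hK ψ h) with hh | hg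
  · exact hh.2
  · exact absurd hg.2 (G.loopless.irrefl x)

lemma R'_propG (ψ : K ≃g K) {x1 x2 : V} {y0 y : W} (h : Rrel G ψ (x1, y0) (x2, y0))
    (hr : Relation.ReflTransGen H.Adj y0 y) : Rrel G ψ (x1, y) (x2, y) := by
  induction hr with
  | refl => exact h
  | @tail b c _ hbc ih =>
    have hG : G.Adj x1 x2 := R'_G hK ψ ih
    exact R'_symm ψ (R'_rho hK ψ (rho_parG hK hG hbc) ih)

lemma R'_propH (ψ : K ≃g K) {x x' : V} {y1 y2 : W} (h : Rrel G ψ (x, y1) (x, y2))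
    (hr : Relation.ReflTransGen G.Adj x x') : Rrel G ψ (x', y1) (x', y2) := by
  induction hr with
  | refl => exact h
  | @tail b c _ hbc ih =>
    have hH : H.Adj y1 y2 := R'_H hK ψ ih
    exact R'_symm ψ (R'_rho hK ψ (rho_parH hK hH hbc) ih)

lemma uFA (ψ : K ≃g K)
    (hPreach : ∀ y y' : W, y ∈ P → y' ∈ P → Relation.ReflTransGen H.Adj y y')
    {x1 x2 : V} {y : W} (hfa : FArel G ψ P x1 x2) (hy : y ∈ P) :
    Rrel G ψ (x1, y) (x2, y) := by
  obtain ⟨y0, hy0, h⟩ := hfa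
  exact R'_propG hK ψ h (hPreach y0 y hy0 hy)

lemma uFB (ψ : K ≃g K) (hGreach : ∀ x x' : V, Relation.ReflTransGen G.Adj x x')
    {y1 y2 : W} (hfb : FBrel G ψ y1 y2) (x : V) : Rrel G ψ (x, y1) (x, y2) := by
  obtain ⟨x0, h⟩ := hfb
  exact R'_propH hK ψ h (hGreach x0 x)

lemma FB_H (ψ : K ≃g K) {y1 y2 : W} (hfb : FBrel G ψ y1 y2) : H.Adj y1 y2 := by
  obtain ⟨x0, h⟩ := hfb
  exact R'_H hK ψ h

lemma FBrtg_part (ψ : K ≃g K) (hP : ∀ y y' : W, H.Adj y y' → y ∈ P → y' ∈ P)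
    {y1 y2 : W} (h : Relation.ReflTransGen (FBrel G ψ) y1 y2) (h1 : y1 ∈ P) : y2 ∈ P := by
  induction h with
  | refl => exact h1
  | tail _ hbc ih => exact hP _ _ (FB_H hK ψ hbc) ih

lemma R'_fwd (ψ : K ≃g K) (hP : ∀ y y' : W, H.Adj y y' → y ∈ P → y' ∈ P)
    {a b : V × W} (h : Relation.ReflTransGen (Rrel G ψ) a b) (ha : a.2 ∈ P) :
    Relation.ReflTransGen (FArel G ψ P) a.1 b.1 ∧
    Relation.ReflTransGen (FBrel G ψ) a.2 b.2 ∧ b.2 ∈ P := by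
  induction h with
  | refl => exact ⟨Relation.ReflTransGen.refl, Relation.ReflTransGen.refl, ha⟩
  | @tail b c _ hbc ih =>
    obtain ⟨iA, iB, ibP⟩ := ih
    rcases (hK _ _).mp (R'_adj hK ψ hbc) with hh | hg
    · have hfb : FBrel G ψ b.2 c.2 := by
        refine ⟨b.1, ?_⟩
        have he : (b.1, c.2) = c := Prod.ext_iff.mpr ⟨hh.1, rfl⟩
        rw [show ((b.1 : V), (b.2 : W)) = b from rfl, he]
        exact hbc
      refine ⟨?_, iB.tail hfb, hP _ _ hh.2 ibP⟩
      rw [← hh.1]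
      exact iA
    · have hfa : FArel G ψ P b.1 c.1 := by
        refine ⟨b.2, ibP, ?_⟩
        have he : (c.1, b.2) = c := Prod.ext_iff.mpr ⟨rfl, hg.1⟩
        rw [show ((b.1 : V), (b.2 : W)) = b from rfl, he]
        exact hbc
      refine ⟨iA.tail hfa, ?_, ?_⟩
      · rw [← hg.1]; exact iB
      · rw [← hg.1]; exact ibP

lemma R'_bwd (ψ : K ≃g K) (hGreach : ∀ x x' : V, Relation.ReflTransGen G.Adj x x')
    (hPreach : ∀ y y' : W, y ∈ P → y' ∈ P → Relation.ReflTransGen H.Adj y y')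
    {x x' : V} {y y' : W} (hy : y ∈ P)
    (h1 : Relation.ReflTransGen (FArel G ψ P) x x')
    (h2 : Relation.ReflTransGen (FBrel G ψ) y y') :
    Relation.ReflTransGen (Rrel G ψ) (x, y) (x', y') := by
  have part1 : Relation.ReflTransGen (Rrel G ψ) (x, y) (x', y) := by
    clear h2
    induction h1 with
    | refl => exact Relation.ReflTransGen.refl
    | tail _ hbc ih => exact ih.tail (uFA hK ψ hPreach hbc hy)
  refine part1.trans ?_
  induction h2 with
  | refl => exact Relation.ReflTransGen.refl
  | tail _ hbc ih => exact ih.tail (uFB hK ψ hGreach hbc x')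

lemma class_eq (ψ : K ≃g K) (hGreach : ∀ x x' : V, Relation.ReflTransGen G.Adj x x')
    (hP : ∀ y y' : W, H.Adj y y' → y ∈ P → y' ∈ P)
    (hPreach : ∀ y y' : W, y ∈ P → y' ∈ P → Relation.ReflTransGen H.Adj y y')
    (b : V × W) (hbP : b.2 ∈ P) :
    {c | Relation.ReflTransGen (Rrel G ψ) b c} =
      {x' | Relation.ReflTransGen (FArel G ψ P) b.1 x'} ×ˢ
      {y' | Relation.ReflTransGen (FBrel G ψ) b.2 y'} := by
  ext c
  constructor
  · intro h
    obtain ⟨iA, iB, -⟩ := R'_fwd hK ψ hP h hbP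
    exact ⟨iA, iB⟩
  · rintro ⟨h1, h2⟩
    exact R'_bwd hK ψ hGreach hPreach hbP h1 h2

omit hK in
lemma DG_transport (ψ : K ≃g K) {p c : V × W}
    (h : Relation.ReflTransGen (DGrel G W) p c) :
    Relation.ReflTransGen (Rrel G ψ) (ψ p) (ψ c) := by
  induction h with
  | refl => exact Relation.ReflTransGen.refl
  | tail _ hbc ih => exact ih.tail (R'_of_DG ψ hbc)

omit hK in
lemma R'_transport (ψ : K ≃g K) {q c : V × W}
    (h : Relation.ReflTransGen (Rrel G ψ) q c) :
    Relation.ReflTransGen (DGrel G W) (ψ.symm q) (ψ.symm c) := by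
  induction h with
  | refl => exact Relation.ReflTransGen.refl
  | tail _ hbc ih => exact ih.tail (DG_of_R' ψ hbc)

omit hK in
lemma DG_class (hGreach : ∀ x x' : V, Relation.ReflTransGen G.Adj x x') (p : V × W) :
    {c | Relation.ReflTransGen (DGrel G W) p c} = (Set.univ : Set V) ×ˢ {p.2} := by
  ext c
  constructor
  · intro h
    refine ⟨trivial, ?_⟩
    show c.2 = p.2
    induction h with
    | refl => rfl
    | tail _ hbc ih => exact hbc.1.symm.trans ih
  · rintro ⟨-, hc⟩
    have hc2 : c.2 = p.2 := hc
    have key : ∀ x' : V, Relation.ReflTransGen G.Adj p.1 x' →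
        Relation.ReflTransGen (DGrel G W) p (x', p.2) := by
      intro x' hr
      induction hr with
      | refl => exact Relation.ReflTransGen.refl
      | tail _ hbc ih => exact ih.tail ⟨rfl, hbc⟩
    have := key c.1 (hGreach p.1 c.1)
    rwa [← hc2, Prod.mk.eta] at this

omit hK in
lemma Rclass_card [Fintype V] [Fintype W] (ψ : K ≃g K)
    (hGreach : ∀ x x' : V, Relation.ReflTransGen G.Adj x x') (b : V × W) :
    {c | Relation.ReflTransGen (Rrel G ψ) b c}.ncard = Fintype.card V := by
  have himg : {c | Relation.ReflTransGen (Rrel G ψ) b c} =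
      (fun z => ψ z) '' {c | Relation.ReflTransGen (DGrel G W) (ψ.symm b) c} := by
    ext c
    constructor
    · intro h
      exact ⟨ψ.symm c, R'_transport ψ h, by simp⟩
    · rintro ⟨u, hu, rfl⟩
      have := DG_transport ψ hu
      rwa [RelIso.apply_symm_apply] at this
  rw [himg, Set.ncard_image_of_injective _ ψ.injective, DG_class hGreach,
    univ_prod_singleton_ncard]

lemma count [Fintype V] [Fintype W] (ψ : K ≃g K)
    (hGreach : ∀ x x' : V, Relation.ReflTransGen G.Adj x x')
    (hP : ∀ y y' : W, H.Adj y y' → y ∈ P → y' ∈ P)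
    (hPreach : ∀ y y' : W, y ∈ P → y' ∈ P → Relation.ReflTransGen H.Adj y y')
    (b : V × W) (hbP : b.2 ∈ P) :
    {x' | Relation.ReflTransGen (FArel G ψ P) b.1 x'}.ncard *
      {y' | Relation.ReflTransGen (FBrel G ψ) b.2 y'}.ncard = Fintype.card V := by
  rw [← ncard_prod', ← class_eq hK ψ hGreach hP hPreach b hbP, Rclass_card ψ hGreach]

omit hK in
lemma FB_class_eq (ψ : K ≃g K) {y z : W} (h : Relation.ReflTransGen (FBrel G ψ) y z) :
    {c | Relation.ReflTransGen (FBrel G ψ) z c} =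
      {c | Relation.ReflTransGen (FBrel G ψ) y c} := by
  have hsym : Symmetric (Relation.ReflTransGen (FBrel G ψ)) := by
    haveI : Std.Symm (FBrel G ψ) := ⟨fun _ _ hf => by
      obtain ⟨x, hx⟩ := hf
      exact ⟨x, R'_symm ψ hx⟩⟩
    exact fun a b h => Std.Symm.symm a b h
  ext c
  exact ⟨fun hc => h.trans hc, fun hc => (hsym h).trans hc⟩

lemma FB_dvd [Fintype V] [Fintype W] [Nonempty V] (ψ : K ≃g K)
    (hGreach : ∀ x x' : V, Relation.ReflTransGen G.Adj x x')
    (hP : ∀ y y' : W, H.Adj y y' → y ∈ P → y' ∈ P)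
    (hPreach : ∀ y y' : W, y ∈ P → y' ∈ P → Relation.ReflTransGen H.Adj y y')
    (y0 : W) (hy0 : y0 ∈ P) :
    {y' | Relation.ReflTransGen (FBrel G ψ) y0 y'}.ncard ∣ P.ncard := by
  classical
  obtain ⟨xs⟩ := ‹Nonempty V›
  have haa : 0 < {x' | Relation.ReflTransGen (FArel G ψ P) xs x'}.ncard := by
    rw [Set.ncard_pos (Set.toFinite _)]
    exact ⟨xs, Relation.ReflTransGen.refl⟩
  have hconst : ∀ y ∈ P, {y' | Relation.ReflTransGen (FBrel G ψ) y y'}.ncard =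
      {y' | Relation.ReflTransGen (FBrel G ψ) y0 y'}.ncard := by
    intro y hy
    refine Nat.eq_of_mul_eq_mul_left haa ?_
    have h1 := count hK ψ hGreach hP hPreach (xs, y) hy
    have h2 := count hK ψ hGreach hP hPreach (xs, y0) hy0
    rw [h1, h2]
  set b0 := {y' | Relation.ReflTransGen (FBrel G ψ) y0 y'}.ncard with hb0
  set f : W → Set W := fun z => {c | Relation.ReflTransGen (FBrel G ψ) z c} with hf
  set s : Finset W := (Set.toFinite P).toFinset with hs
  set t : Finset (Set W) := s.image f with ht
  have hmem : ∀ z ∈ s, f z ∈ t := fun z hz => Finset.mem_image_of_mem f hz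
  have hsum := Finset.card_eq_sum_card_fiberwise hmem
  have hfib : ∀ q ∈ t, (s.filter (fun z => f z = q)).card = b0 := by
    intro q hq
    obtain ⟨y, hy, rfl⟩ := Finset.mem_image.mp hq
    have hyP : y ∈ P := (Set.Finite.mem_toFinset _).mp hy
    have hfy_sub : f y ⊆ P := fun z hz => FBrtg_part hK ψ hP hz hyP
    have heq : s.filter (fun z => f z = f y) = (Set.toFinite (f y)).toFinset := by
      ext z
      simp only [Finset.mem_filter, Set.Finite.mem_toFinset, hs]
      constructor
      · rintro ⟨hzP, he⟩
        have : z ∈ f z := Relation.ReflTransGen.refl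
        rwa [he] at this
      · intro hz
        exact ⟨hfy_sub hz, FB_class_eq ψ hz⟩
    rw [heq, ← Set.ncard_eq_toFinset_card (f y)]
    exact hconst y hyP
  have hcard : s.card = t.card * b0 := by
    rw [hsum, Finset.sum_congr rfl hfib, Finset.sum_const, smul_eq_mul]
  refine ⟨t.card, ?_⟩
  rw [Set.ncard_eq_toFinset_card P, ← hs, hcard, mul_comm]

lemma core [Fintype V] [Fintype W] [Nonempty V] (ψ : K ≃g K)
    (hGreach : ∀ x x' : V, Relation.ReflTransGen G.Adj x x')
    (hP : ∀ y y' : W, H.Adj y y' → y ∈ P → y' ∈ P)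
    (hPreach : ∀ y y' : W, y ∈ P → y' ∈ P → Relation.ReflTransGen H.Adj y y')
    (hcop : Nat.Coprime P.ncard (Fintype.card V))
    (b : V × W) (hbP : b.2 ∈ P) :
    {c | Relation.ReflTransGen (Rrel G ψ) b c} = (Set.univ : Set V) ×ˢ {b.2} := by
  have hcount := count hK ψ hGreach hP hPreach b hbP
  have hdvd1 : {y' | Relation.ReflTransGen (FBrel G ψ) b.2 y'}.ncard ∣ Fintype.card V :=
    ⟨_, by rw [← hcount, mul_comm]⟩
  have hdvd2 := FB_dvd hK ψ hGreach hP hPreach b.2 hbP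
  have hb1 : {y' | Relation.ReflTransGen (FBrel G ψ) b.2 y'}.ncard = 1 :=
    Nat.dvd_one.mp (hcop ▸ Nat.dvd_gcd hdvd2 hdvd1)
  have hBset : {y' | Relation.ReflTransGen (FBrel G ψ) b.2 y'} = {b.2} := by
    obtain ⟨c, hc⟩ := Set.ncard_eq_one.mp hb1
    have hm : b.2 ∈ {y' | Relation.ReflTransGen (FBrel G ψ) b.2 y'} := Relation.ReflTransGen.refl
    rw [hc] at hm ⊢
    rw [Set.mem_singleton_iff] at hm
    rw [hm]
  have hAcard : {x' | Relation.ReflTransGen (FArel G ψ P) b.1 x'}.ncard = Fintype.card V := by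
    rw [hb1, mul_one] at hcount
    exact hcount
  have hAset : {x' | Relation.ReflTransGen (FArel G ψ P) b.1 x'} = Set.univ := by
    exact Set.eq_of_subset_of_ncard_le (Set.subset_univ _)
      (le_of_eq (by rw [hAcard, Set.ncard_univ, Nat.card_eq_fintype_card])) (Set.toFinite _)
  rw [class_eq hK ψ hGreach hP hPreach b hbP, hAset, hBset]

end Machinery

section LayerSec
variable {V W : Type*} [Fintype V] [Fintype W]

lemma exists_adj_of_edge {A : Type*} {G : SimpleGraph A} (h : G.edgeSet.Nonempty) :
    ∃ a b, G.Adj a b := by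
  obtain ⟨e, he⟩ := h
  induction e with
  | _ a b => exact ⟨a, b, he⟩

lemma layer_sec (X : SimpleGraph V) (Y : SimpleGraph W)
    (hXtf : ∀ v w : V, X.neighborSet v = X.neighborSet w → v = w)
    (hYtf : ∀ v w : W, Y.neighborSet v = Y.neighborSet w → v = w)
    (hXconn : X.Connected) (hYconn : Y.Connected)
    (hXe : X.edgeSet.Nonempty) (hYe : Y.edgeSet.Nonempty)
    (hXnotbip : ¬ X.Colorable 2)
    (Y0 Y1 : Set W) (hYcover : Y0 ∪ Y1 = Set.univ) (hYdisj : Disjoint Y0 Y1)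
    (hYbip : ∀ v w : W, Y.Adj v w → (v ∈ Y0 ∧ w ∈ Y1) ∨ (v ∈ Y1 ∧ w ∈ Y0))
    (hcop0 : Nat.Coprime Y0.ncard (Fintype.card V))
    (hcop1 : Nat.Coprime Y1.ncard (Fintype.card V))
    (φ : directProd X Y ≃g directProd X Y) :
    ∀ (y : W) (x x' : V), (φ (x, y)).2 = (φ (x', y)).2 := by
  obtain ⟨a, b, hab⟩ := exists_adj_of_edge hXe
  obtain ⟨c, d, hcd⟩ := exists_adj_of_edge hYe
  haveI : Nonempty V := ⟨a⟩
  haveI : Nonempty W := ⟨c⟩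
  have hniX := conn_no_isolated hXconn ⟨a, b, hab.ne⟩
  have hniY := conn_no_isolated hYconn ⟨c, d, hcd.ne⟩
  have hGreach := skelX_reach hXconn hXnotbip hniX
  have hK : ∀ p q : V × W, (skel (directProd X Y)).Adj p q ↔
      ((p.1 = q.1 ∧ (skel Y).Adj p.2 q.2) ∨ (p.2 = q.2 ∧ (skel X).Adj p.1 q.1)) := by
    intro p q
    exact skel_prod_adj hniX hniY hXtf hYtf p.1 q.1 p.2 q.2
  set ψ : skel (directProd X Y) ≃g skel (directProd X Y) :=
    ⟨φ.toEquiv, fun {u v} => (iso_skel_adj φ).symm⟩ with hψ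
  have hcov : ∀ w : W, w ∈ Y0 ∪ Y1 := fun w => hYcover ▸ Set.mem_univ w
  have hpartH : ∀ y1 y2 : W, (skel Y).Adj y1 y2 →
      (y1 ∈ Y0 ∧ y2 ∈ Y0) ∨ (y1 ∈ Y1 ∧ y2 ∈ Y1) :=
    fun y1 y2 h => bsq_part hYdisj hYbip h.1 (hcov y1)
  have hP0 : ∀ y1 y2 : W, (skel Y).Adj y1 y2 → y1 ∈ Y0 → y2 ∈ Y0 := by
    intro y1 y2 h h1
    rcases hpartH y1 y2 h with ⟨_, h2⟩ | ⟨h2, _⟩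
    · exact h2
    · exact absurd h1 (Set.disjoint_right.mp hYdisj h2)
  have hP1 : ∀ y1 y2 : W, (skel Y).Adj y1 y2 → y1 ∈ Y1 → y2 ∈ Y1 := by
    intro y1 y2 h h1
    rcases hpartH y1 y2 h with ⟨h2, _⟩ | ⟨_, h2⟩
    · exact absurd h1 (Set.disjoint_left.mp hYdisj h2)
    · exact h2
  have hPreach0 : ∀ y1 y2 : W, y1 ∈ Y0 → y2 ∈ Y0 →
      Relation.ReflTransGen (skel Y).Adj y1 y2 := fun y1 y2 h1 h2 =>
    part_skel_reach hYdisj hYbip hYconn hniY (Or.inl ⟨h1, h2⟩)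
  have hPreach1 : ∀ y1 y2 : W, y1 ∈ Y1 → y2 ∈ Y1 →
      Relation.ReflTransGen (skel Y).Adj y1 y2 := fun y1 y2 h1 h2 =>
    part_skel_reach hYdisj hYbip hYconn hniY (Or.inr ⟨h1, h2⟩)
  intro y x x'
  have hDG : Relation.ReflTransGen (DGrel (skel X) W) (x, y) (x', y) := by
    have key : ∀ u : V, Relation.ReflTransGen (skel X).Adj x u →
        Relation.ReflTransGen (DGrel (skel X) W) (x, y) (u, y) := by
      intro u hr
      induction hr with
      | refl => exact Relation.ReflTransGen.refl
      | tail _ hbc ih => exact ih.tail ⟨rfl, hbc⟩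
    exact key x' (hGreach x x')
  have hmem : (φ (x', y)) ∈ {cc | Relation.ReflTransGen (Rrel (skel X) ψ) (φ (x, y)) cc} := by
    have := DG_transport ψ hDG
    exact this
  rcases hcov ((φ (x, y)).2) with hbP | hbP
  · have hcore := core hK ψ hGreach hP0 hPreach0 hcop0 (φ (x, y)) hbP
    rw [hcore] at hmem
    exact hmem.2.symm
  · have hcore := core hK ψ hGreach hP1 hPreach1 hcop1 (φ (x, y)) hbP
    rw [hcore] at hmem
    exact hmem.2.symm

end LayerSec


/-- If `X` is non-bipartite and stable, `Y` is bipartite with parts coprime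
to `|V(X)|` (and the parts have different sizes or are interchanged by an
automorphism), and both graphs are twin-free, connected, with an edge, then
every automorphism of `X × Y` is a product of automorphisms of the factors. -/
theorem aut_directProd_of_stable {V W : Type*} [Fintype V] [Fintype W]
    (X : SimpleGraph V) (Y : SimpleGraph W)
    (hXtf : ∀ v w : V, X.neighborSet v = X.neighborSet w → v = w)
    (hYtf : ∀ v w : W, Y.neighborSet v = Y.neighborSet w → v = w)
    (hXconn : X.Connected) (hYconn : Y.Connected)
    (hXe : X.edgeSet.Nonempty) (hYe : Y.edgeSet.Nonempty)
    (hXnotbip : ¬ X.Colorable 2)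
    (Y0 Y1 : Set W) (hYcover : Y0 ∪ Y1 = Set.univ) (hYdisj : Disjoint Y0 Y1)
    (hYbip : ∀ v w : W, Y.Adj v w → (v ∈ Y0 ∧ w ∈ Y1) ∨ (v ∈ Y1 ∧ w ∈ Y0))
    (hcop0 : Nat.Coprime Y0.ncard (Fintype.card V))
    (hcop1 : Nat.Coprime Y1.ncard (Fintype.card V))
    (hswap : Y0.ncard ≠ Y1.ncard ∨
      ∃ β : Y ≃g Y, (fun w => β w) '' Y0 = Y1 ∧ (fun w => β w) '' Y1 = Y0)
    (hstable : ∀ φ : doubleCover X ≃g doubleCover X,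
      ∃ (α : X ≃g X) (σ : Equiv.Perm (ZMod 2)),
        ∀ (v : V) (i : ZMod 2), φ (v, i) = (α v, σ i)) :
    ∀ φ : directProd X Y ≃g directProd X Y,
      ∃ (α : X ≃g X) (β : Y ≃g Y),
        ∀ (x : V) (y : W), φ (x, y) = (α x, β y) := by
  intro φ
  obtain ⟨a, b, hab⟩ := exists_adj_of_edge hXe
  obtain ⟨c, d, hcd⟩ := exists_adj_of_edge hYe
  haveI : Nonempty V := ⟨a⟩
  have hlay := layer_sec X Y hXtf hYtf hXconn hYconn hXe hYe hXnotbip Y0 Y1 hYcover hYdisj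
    hYbip hcop0 hcop1 φ
  have hlay' := layer_sec X Y hXtf hYtf hXconn hYconn hXe hYe hXnotbip Y0 Y1 hYcover hYdisj
    hYbip hcop0 hcop1 φ.symm
  set β : W → W := fun y => (φ (a, y)).2 with hβdef
  set β' : W → W := fun y => (φ.symm (a, y)).2 with hβ'def
  have hsnd : ∀ (x : V) (y : W), (φ (x, y)).2 = β y := fun x y => hlay y x a
  have hsnd' : ∀ (x : V) (y : W), (φ.symm (x, y)).2 = β' y := fun x y => hlay' y x a
  set g : W → V → V := fun y x => (φ (x, y)).1 with hgdef
  have hφeq : ∀ x y, φ (x, y) = (g y x, β y) := fun x y => Prod.ext_iff.mpr ⟨rfl, hsnd x y⟩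
  have hββ' : ∀ y, β' (β y) = y := by
    intro y
    have h1 : φ.symm (φ (a, y)) = (a, y) := φ.symm_apply_apply (a, y)
    have h2 := hsnd' (g y a) (β y)
    rw [← hφeq, h1] at h2
    exact h2.symm
  have hβ'β : ∀ y, β (β' y) = y := by
    intro y
    have h1 : φ (φ.symm (a, y)) = (a, y) := φ.apply_symm_apply (a, y)
    have h2 := hsnd (φ.symm (a, y)).1 (β' y)
    have h3 : ((φ.symm (a, y)).1, β' y) = φ.symm (a, y) :=
      Prod.ext_iff.mpr ⟨rfl, (hsnd' a y).symm⟩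
    rw [h3, h1] at h2
    exact h2.symm
  have hβadj : ∀ y y', Y.Adj y y' → Y.Adj (β y) (β y') := by
    intro y y' h
    have hZ : (directProd X Y).Adj (a, y) (b, y') := ⟨hab, h⟩
    have h2 := (φ.map_adj_iff.mpr hZ).2
    rwa [hsnd a y, hsnd b y'] at h2
  have hβ'adj : ∀ y y', Y.Adj y y' → Y.Adj (β' y) (β' y') := by
    intro y y' h
    have hZ : (directProd X Y).Adj (a, y) (b, y') := ⟨hab, h⟩
    have h2 := (φ.symm.map_adj_iff.mpr hZ).2
    rwa [hsnd' a y, hsnd' b y'] at h2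
  have hβiso_rel : ∀ {y y' : W}, Y.Adj (β y) (β y') ↔ Y.Adj y y' := by
    intro y y'
    constructor
    · intro h
      have := hβ'adj _ _ h
      rwa [hββ', hββ'] at this
    · exact hβadj y y'
  have hginj : ∀ y, Function.Injective (g y) := by
    intro y u u' h
    have heq : φ (u, y) = φ (u', y) := by rw [hφeq, hφeq, h]
    exact (Prod.ext_iff.mp (φ.injective heq)).1
  have hgbij : ∀ y, Function.Bijective (g y) :=
    fun y => Finite.injective_iff_bijective.mp (hginj y)
  have htf : ∀ {y y' : W}, Y.Adj y y' → ∀ u u', X.Adj u u' ↔ X.Adj (g y u) (g y' u') := by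
    intro y y' hyy' u u'
    constructor
    · intro h
      exact (φ.map_adj_iff.mpr (⟨h, hyy'⟩ : (directProd X Y).Adj (u, y) (u', y'))).1
    · intro h
      have hZ : (directProd X Y).Adj (g y u, β y) (g y' u', β y') := ⟨h, hβadj y y' hyy'⟩
      rw [← hφeq, ← hφeq] at hZ
      exact (φ.map_adj_iff.mp hZ).1
  have hz2 : ∀ i : ZMod 2, i = 0 ∨ i = 1 := by decide
  have hedge : ∀ {y y' : W}, Y.Adj y y' →
      ∃ α : X ≃g X, (∀ v, g y v = α v) ∧ (∀ v, g y' v = α v) := by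
    intro y y' hyy'
    obtain ⟨iy, hiy1, hiy2⟩ := Function.bijective_iff_has_inverse.mp (hgbij y)
    obtain ⟨iy', hiy'1, hiy'2⟩ := Function.bijective_iff_has_inverse.mp (hgbij y')
    classical
    have hne10 : (1 : ZMod 2) ≠ 0 := by decide
    set Φe : (V × ZMod 2) ≃ (V × ZMod 2) :=
      { toFun := fun p => (if p.2 = 0 then g y p.1 else g y' p.1, p.2)
        invFun := fun p => (if p.2 = 0 then iy p.1 else iy' p.1, p.2)
        left_inv := by
          rintro ⟨p1, p2⟩
          rcases hz2 p2 with rfl | rfl <;> simp [hne10, hiy1 p1, hiy'1 p1]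
        right_inv := by
          rintro ⟨p1, p2⟩
          rcases hz2 p2 with rfl | rfl <;> simp [hne10, hiy2 p1, hiy'2 p1] } with hΦe
    have hΦ0 : ∀ v, Φe (v, 0) = (g y v, (0 : ZMod 2)) := fun v => by simp [hΦe]
    have hΦ1 : ∀ v, Φe (v, 1) = (g y' v, (1 : ZMod 2)) := fun v => by simp [hΦe, hne10]
    have hrel : ∀ {p q : V × ZMod 2},
        (doubleCover X).Adj (Φe p) (Φe q) ↔ (doubleCover X).Adj p q := by
      rintro ⟨p1, p2⟩ ⟨q1, q2⟩
      rcases hz2 p2 with rfl | rfl <;> rcases hz2 q2 with rfl | rfl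
      · rw [hΦ0, hΦ0]
        constructor <;> (rintro ⟨-, h⟩; exact absurd rfl h)
      · rw [hΦ0, hΦ1]
        constructor
        · rintro ⟨h1, h2⟩
          exact ⟨(htf hyy' p1 q1).mpr h1, h2⟩
        · rintro ⟨h1, h2⟩
          exact ⟨(htf hyy' p1 q1).mp h1, h2⟩
      · rw [hΦ1, hΦ0]
        constructor
        · rintro ⟨h1, h2⟩
          exact ⟨((htf hyy' q1 p1).mpr h1.symm).symm, h2⟩
        · rintro ⟨h1, h2⟩
          exact ⟨((htf hyy' q1 p1).mp h1.symm).symm, h2⟩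
      · rw [hΦ1, hΦ1]
        constructor <;> (rintro ⟨-, h⟩; exact absurd rfl h)
    let Φiso : doubleCover X ≃g doubleCover X := ⟨Φe, hrel⟩
    have hΦapp : ∀ p : V × ZMod 2, Φiso p = Φe p := fun p => rfl
    obtain ⟨α, σ, hiso⟩ := hstable Φiso
    have h0 : ∀ v, (g y v, (0 : ZMod 2)) = (α v, σ 0) := by
      intro v
      have hh := hiso v 0
      rwa [hΦapp, hΦ0 v] at hh
    have h1 : ∀ v, (g y' v, (1 : ZMod 2)) = (α v, σ 1) := by
      intro v
      have hh := hiso v 1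
      rwa [hΦapp, hΦ1 v] at hh
    exact ⟨α, fun v => (Prod.ext_iff.mp (h0 v)).1, fun v => (Prod.ext_iff.mp (h1 v)).1⟩
  have hconst : ∀ {y y' : W} (_ : Y.Walk y y'), g y = g y' := by
    intro y y' p
    induction p with
    | nil => rfl
    | cons hadj q ih =>
      obtain ⟨α, h1, h2⟩ := hedge hadj
      exact (funext fun v => (h1 v).trans (h2 v).symm).trans ih
  obtain ⟨α, hα1, hα2⟩ := hedge hcd
  refine ⟨α, ⟨⟨β, β', hββ', hβ'β⟩, fun {u v} => hβiso_rel⟩, ?_⟩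
  intro x y
  rw [hφeq x y]
  refine Prod.ext_iff.mpr ⟨?_, rfl⟩
  obtain ⟨p⟩ := hYconn.preconnected y c
  rw [hconst p]
  exact hα1 x
end
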